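/- arXiv:2202.05804 — 3 statements merged into one kernel-verified Lean document; each statement's English description precedes it below -/
import Mathlib

section
/- Let X ≥ 1. The number of integral solutions of the system x_1 + x_2 + x_3 = y_1 + y_2 + y_3 and x_1² + x_2² + x_3² = y_1² + y_2² + y_3², with 1 ≤ x_i, y_i ≤ X for 1 ≤ i ≤ 3, is O(X³ log(2X)). -/
open Finset


lemma sum_inv_le_harmonic (N : ℕ) :
    ∑ g ∈ Icc 1 N, ((g : ℝ))⁻¹ ≤ 1 + Real.log N := by
  calc ∑ g ∈ Icc 1 N, ((g : ℝ))⁻¹ = ((harmonic N : ℚ) : ℝ) := by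
        rw [harmonic_eq_sum_Icc]; push_cast; rfl
    _ ≤ 1 + Real.log N := harmonic_le_one_add_log N

lemma quadruple_count (N : ℕ) :
    ((filter (fun q : (ℕ × ℕ) × ℕ × ℕ => q.1.1 * q.2.1 = q.1.2 * q.2.2)
      ((Icc 1 N ×ˢ Icc 1 N) ×ˢ Icc 1 N ×ˢ Icc 1 N)).card : ℝ)
      ≤ 2 * N ^ 2 * (1 + Real.log N) := by
  classical
  set D : Finset ((ℕ × ℕ) × ℕ × ℕ) :=
    filter (fun r : (ℕ × ℕ) × ℕ × ℕ =>
      r.2.1 * max r.1.1 r.1.2 ≤ N ∧ r.2.2 * max r.1.1 r.1.2 ≤ N)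
      ((Icc 1 N ×ˢ Icc 1 N) ×ˢ Icc 1 N ×ˢ Icc 1 N) with hD
  have hsub : (filter (fun q : (ℕ × ℕ) × ℕ × ℕ => q.1.1 * q.2.1 = q.1.2 * q.2.2)
      ((Icc 1 N ×ˢ Icc 1 N) ×ˢ Icc 1 N ×ˢ Icc 1 N)) ⊆
      D.image (fun r => ((r.2.1 * r.1.1, r.2.1 * r.1.2), (r.2.2 * r.1.2, r.2.2 * r.1.1))) := by
    intro q hq
    simp only [mem_filter, mem_product, mem_Icc] at hq
    obtain ⟨⟨⟨⟨ha1, ha2⟩, hb1, hb2⟩, ⟨hA1, hA2⟩, hB1, hB2⟩, heq⟩ := hq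
    set a := q.1.1 with hqa; set b := q.1.2; set A := q.2.1; set B := q.2.2
    set e := Nat.gcd a b with he
    have he0 : 0 < e := Nat.gcd_pos_of_pos_left _ ha1
    set g := a / e with hg
    set h := b / e with hh
    have hag : a = e * g := (Nat.mul_div_cancel' (Nat.gcd_dvd_left a b)).symm
    have hbh : b = e * h := (Nat.mul_div_cancel' (Nat.gcd_dvd_right a b)).symm
    have hcop : Nat.Coprime g h := Nat.coprime_div_gcd_div_gcd he0
    have hg0 : 0 < g := Nat.div_pos (Nat.le_of_dvd ha1 (Nat.gcd_dvd_left a b)) he0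
    have hh0 : 0 < h := Nat.div_pos (Nat.le_of_dvd hb1 (Nat.gcd_dvd_right a b)) he0
    have hgA : g * A = h * B := by
      apply Nat.eq_of_mul_eq_mul_left he0
      calc e * (g * A) = (e * g) * A := by ring
        _ = (e * h) * B := by rw [← hag, ← hbh]; exact heq
        _ = e * (h * B) := by ring
    have hhA : h ∣ A := (Nat.Coprime.dvd_of_dvd_mul_left (hcop.symm) ⟨B, hgA.symm ▸ rfl⟩)
    set f := A / h with hf
    have hAf : A = h * f := (Nat.mul_div_cancel' hhA).symm
    have hf0 : 0 < f := Nat.div_pos (Nat.le_of_dvd hA1 hhA) hh0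
    have hBf : B = g * f := by
      apply Nat.eq_of_mul_eq_mul_left hh0
      calc h * B = g * A := hgA.symm
        _ = g * (h * f) := by rw [← hAf]
        _ = h * (g * f) := by ring
    refine mem_image.2 ⟨((g, h), (e, f)), ?_, ?_⟩
    · rw [hD, mem_filter]
      constructor
      · simp only [mem_product, mem_Icc]
        refine ⟨⟨⟨hg0, ?_⟩, hh0, ?_⟩, ⟨he0, ?_⟩, hf0, ?_⟩
        · exact le_trans (Nat.le_of_dvd ha1 ⟨e, by rw [hag]; ring⟩) ha2
        · exact le_trans (Nat.le_of_dvd hb1 ⟨e, by rw [hbh]; ring⟩) hb2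
        · exact le_trans (Nat.le_of_dvd ha1 ⟨g, hag⟩) ha2
        · exact le_trans (Nat.le_of_dvd hA1 ⟨h, by rw [hAf]; ring⟩) hA2
      · constructor
        · rcases max_cases g h with ⟨hm, _⟩ | ⟨hm, _⟩ <;> rw [hm]
          · rw [← hag]; exact ha2
          · rw [← hbh]; exact hb2
        · rcases max_cases g h with ⟨hm, _⟩ | ⟨hm, _⟩ <;> rw [hm]
          · rw [mul_comm, ← hBf]; exact hB2
          · rw [mul_comm, ← hAf]; exact hA2
    · refine Prod.ext (Prod.ext ?_ ?_) (Prod.ext ?_ ?_)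
      · exact hag.symm
      · exact hbh.symm
      · rw [show (((e*g, e*h), (f*h, f*g)) : (ℕ×ℕ)×ℕ×ℕ).2.1 = f*h from rfl, mul_comm]
        exact hAf.symm
      · rw [show (((e*g, e*h), (f*h, f*g)) : (ℕ×ℕ)×ℕ×ℕ).2.2 = f*g from rfl, mul_comm]
        exact hBf.symm
  have hcard1 : (filter (fun q : (ℕ × ℕ) × ℕ × ℕ => q.1.1 * q.2.1 = q.1.2 * q.2.2)
      ((Icc 1 N ×ˢ Icc 1 N) ×ˢ Icc 1 N ×ˢ Icc 1 N)).card ≤ D.card :=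
    le_trans (card_le_card hsub) (card_image_le)
  have hDsub : D ⊆ (Icc 1 N ×ˢ Icc 1 N).biUnion
      (fun gh => ({gh} : Finset (ℕ × ℕ)) ×ˢ
        (Icc 1 (N / max gh.1 gh.2) ×ˢ Icc 1 (N / max gh.1 gh.2))) := by
    intro r hr
    rw [hD, mem_filter] at hr
    obtain ⟨hbox, hr1, hr2⟩ := hr
    simp only [mem_product, mem_Icc] at hbox
    obtain ⟨⟨⟨hg1, hg2⟩, hh1, hh2⟩, ⟨he1, _⟩, hf1, _⟩ := hbox
    have hmax : 0 < max r.1.1 r.1.2 := lt_of_lt_of_le hg1 (le_max_left _ _)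
    refine mem_biUnion.2 ⟨r.1, ?_, ?_⟩
    · simp only [mem_product, mem_Icc]; exact ⟨⟨hg1, hg2⟩, hh1, hh2⟩
    · rw [mem_product]
      refine ⟨mem_singleton_self _, ?_⟩
      rw [mem_product, mem_Icc, mem_Icc]
      exact ⟨⟨he1, (Nat.le_div_iff_mul_le hmax).2 hr1⟩,
        hf1, (Nat.le_div_iff_mul_le hmax).2 hr2⟩
  have hcard2 : D.card ≤ ∑ gh ∈ Icc 1 N ×ˢ Icc 1 N, (N / max gh.1 gh.2) ^ 2 := by
    refine le_trans (card_le_card hDsub) (le_trans (card_biUnion_le) ?_)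
    apply Finset.sum_le_sum
    intro gh _
    rw [card_product, card_product, card_singleton, one_mul, Nat.card_Icc]
    rw [Nat.add_sub_cancel, sq]
  have hsum : ((∑ gh ∈ Icc 1 N ×ˢ Icc 1 N, (N / max gh.1 gh.2) ^ 2 : ℕ) : ℝ)
      ≤ 2 * N ^ 2 * (1 + Real.log N) := by
    push_cast
    have step1 : ∀ gh ∈ Icc 1 N ×ˢ Icc 1 N,
        ((N / max gh.1 gh.2 : ℕ) : ℝ) ^ 2 ≤
          (N : ℝ) ^ 2 * ((if gh.2 ≤ gh.1 then ((gh.1 : ℝ) ^ 2)⁻¹ else 0)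
            + (if gh.1 ≤ gh.2 then ((gh.2 : ℝ) ^ 2)⁻¹ else 0)) := by
      intro gh hgh
      simp only [mem_product, mem_Icc] at hgh
      obtain ⟨⟨hg1, _⟩, hh1, _⟩ := hgh
      have hle : ((N / max gh.1 gh.2 : ℕ) : ℝ) ≤ (N : ℝ) / ((max gh.1 gh.2 : ℕ) : ℝ) :=
        Nat.cast_div_le
      have h0 : (0:ℝ) ≤ ((N / max gh.1 gh.2 : ℕ) : ℝ) := by positivity
      have hsq : ((N / max gh.1 gh.2 : ℕ) : ℝ) ^ 2 ≤
          ((N:ℝ) / ((max gh.1 gh.2 : ℕ) : ℝ)) ^ 2 := pow_le_pow_left₀ h0 hle 2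
      refine le_trans hsq ?_
      rw [div_pow]
      have hite1 : (0:ℝ) ≤ if gh.2 ≤ gh.1 then ((gh.1 : ℝ) ^ 2)⁻¹ else 0 := by
        split_ifs <;> positivity
      have hite2 : (0:ℝ) ≤ if gh.1 ≤ gh.2 then ((gh.2 : ℝ) ^ 2)⁻¹ else 0 := by
        split_ifs <;> positivity
      have hN2 : (0:ℝ) ≤ (N:ℝ)^2 := by positivity
      rcases le_total gh.1 gh.2 with hc | hc
      · rw [max_eq_right hc, if_pos hc, div_eq_mul_inv]
        nlinarith [mul_le_mul_of_nonneg_left hite1 hN2]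
      · rw [max_eq_left hc, if_pos hc, div_eq_mul_inv]
        nlinarith [mul_le_mul_of_nonneg_left hite2 hN2]
    have hIte : ∀ g ∈ Icc 1 N,
        ∑ h ∈ Icc 1 N, (if h ≤ g then ((g:ℝ)^2)⁻¹ else 0) = ((g:ℝ))⁻¹ := by
      intro g hg
      rw [mem_Icc] at hg
      have hfil : filter (fun h => h ≤ g) (Icc 1 N) = Icc 1 g := by
        ext h; simp only [mem_filter, mem_Icc]; omega
      rw [← Finset.sum_filter, hfil, Finset.sum_const, Nat.card_Icc, Nat.add_sub_cancel,
        nsmul_eq_mul]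
      have hg0 : (g:ℝ) ≠ 0 := by
        have : 0 < g := hg.1
        positivity
      field_simp
    calc ∑ gh ∈ Icc 1 N ×ˢ Icc 1 N, ((N / max gh.1 gh.2 : ℕ) : ℝ) ^ 2
        ≤ ∑ gh ∈ Icc 1 N ×ˢ Icc 1 N,
            (N : ℝ) ^ 2 * ((if gh.2 ≤ gh.1 then ((gh.1 : ℝ) ^ 2)⁻¹ else 0)
              + (if gh.1 ≤ gh.2 then ((gh.2 : ℝ) ^ 2)⁻¹ else 0)) :=
          Finset.sum_le_sum step1
      _ = (N:ℝ)^2 * ((∑ gh ∈ Icc 1 N ×ˢ Icc 1 N,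
              (if gh.2 ≤ gh.1 then ((gh.1 : ℝ) ^ 2)⁻¹ else 0))
            + ∑ gh ∈ Icc 1 N ×ˢ Icc 1 N,
              (if gh.1 ≤ gh.2 then ((gh.2 : ℝ) ^ 2)⁻¹ else 0)) := by
          rw [← Finset.sum_add_distrib, Finset.mul_sum]
      _ ≤ (N:ℝ)^2 * ((1 + Real.log N) + (1 + Real.log N)) := by
          apply mul_le_mul_of_nonneg_left _ (by positivity)
          have hS1 : (∑ gh ∈ Icc 1 N ×ˢ Icc 1 N,
              (if gh.2 ≤ gh.1 then ((gh.1 : ℝ) ^ 2)⁻¹ else 0)) ≤ 1 + Real.log N := by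
            rw [Finset.sum_product]
            calc ∑ g ∈ Icc 1 N, ∑ h ∈ Icc 1 N, (if h ≤ g then ((g:ℝ)^2)⁻¹ else 0)
                = ∑ g ∈ Icc 1 N, ((g:ℝ))⁻¹ := Finset.sum_congr rfl hIte
              _ ≤ 1 + Real.log N := sum_inv_le_harmonic N
          have hS2 : (∑ gh ∈ Icc 1 N ×ˢ Icc 1 N,
              (if gh.1 ≤ gh.2 then ((gh.2 : ℝ) ^ 2)⁻¹ else 0)) ≤ 1 + Real.log N := by
            rw [Finset.sum_product, Finset.sum_comm]
            calc ∑ h ∈ Icc 1 N, ∑ g ∈ Icc 1 N, (if g ≤ h then ((h:ℝ)^2)⁻¹ else 0)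
                = ∑ h ∈ Icc 1 N, ((h:ℝ))⁻¹ := Finset.sum_congr rfl hIte
              _ ≤ 1 + Real.log N := sum_inv_le_harmonic N
          linarith
      _ = 2 * N ^ 2 * (1 + Real.log N) := by ring
  calc ((filter (fun q : (ℕ × ℕ) × ℕ × ℕ => q.1.1 * q.2.1 = q.1.2 * q.2.2)
      ((Icc 1 N ×ˢ Icc 1 N) ×ˢ Icc 1 N ×ˢ Icc 1 N)).card : ℝ)
      ≤ ((∑ gh ∈ Icc 1 N ×ˢ Icc 1 N, (N / max gh.1 gh.2) ^ 2 : ℕ) : ℝ) := by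
        exact_mod_cast le_trans hcard1 hcard2
    _ ≤ 2 * N ^ 2 * (1 + Real.log N) := hsum

lemma int_eq_count (M : ℕ) (hM : 1 ≤ M) :
    ((filter (fun q : (ℤ × ℤ) × ℤ × ℤ =>
        q.1.1 * q.2.1 = -(q.1.2 * q.2.2) ∧ q.1.1 + q.1.2 ≠ 0)
      ((Icc (-(M:ℤ)) M ×ˢ Icc (-(M:ℤ)) M) ×ˢ
        Icc (-(4*M:ℤ)) (4*M) ×ˢ Icc (-(4*M:ℤ)) (4*M))).card : ℝ)
      ≤ 324 * M ^ 2 + 32 * (4*M : ℕ) ^ 2 * (1 + Real.log (4*M : ℕ)) := by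
  classical
  set IM : Finset ℤ := Icc (-(M:ℤ)) M with hIM
  set I4 : Finset ℤ := Icc (-(4*M:ℤ)) (4*M) with hI4
  set S : Finset ((ℤ × ℤ) × ℤ × ℤ) := filter (fun q =>
        q.1.1 * q.2.1 = -(q.1.2 * q.2.2) ∧ q.1.1 + q.1.2 ≠ 0)
      ((IM ×ˢ IM) ×ˢ I4 ×ˢ I4) with hS
  set zero : ((ℤ × ℤ) × ℤ × ℤ) → Prop := fun q =>
    q.1.1 = 0 ∨ q.1.2 = 0 ∨ q.2.1 = 0 ∨ q.2.2 = 0 with hzero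
  have hsplit : S.card = (S.filter zero).card + (S.filter (fun q => ¬ zero q)).card :=
    (Finset.card_filter_add_card_filter_not _).symm
  have hIMcard : IM.card = 2*M + 1 := by
    rw [hIM, Int.card_Icc]; omega
  have hI4card : I4.card = 8*M + 1 := by
    rw [hI4, Int.card_Icc]; omega
  -- zero part
  have hzcard : (S.filter zero).card ≤ 324 * M ^ 2 := by
    have hsub : S.filter zero ⊆
        ((({(0:ℤ)} ×ˢ {(0:ℤ)}) ×ˢ I4 ×ˢ I4) ∪
         (({(0:ℤ)} ×ˢ IM) ×ˢ I4 ×ˢ {(0:ℤ)})) ∪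
        (((IM ×ˢ {(0:ℤ)}) ×ˢ {(0:ℤ)} ×ˢ I4) ∪
         ((IM ×ˢ IM) ×ˢ {(0:ℤ)} ×ˢ {(0:ℤ)})) := by
      intro q hq
      simp only [hS, hzero, mem_filter, mem_product] at hq
      obtain ⟨⟨⟨⟨ha, hb⟩, hA, hB⟩, heq, hne⟩, hz⟩ := hq
      have hkey : (q.1.1 = 0 ∨ q.2.1 = 0) ∧ (q.1.2 = 0 ∨ q.2.2 = 0) := by
        rcases hz with h | h | h | h
        · have : q.1.2 * q.2.2 = 0 := by
            have : q.1.1 * q.2.1 = 0 := by rw [h]; ring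
            omega
          exact ⟨Or.inl h, mul_eq_zero.mp this⟩
        · have : q.1.1 * q.2.1 = 0 := by
            have : q.1.2 * q.2.2 = 0 := by rw [h]; ring
            omega
          exact ⟨mul_eq_zero.mp this, Or.inl h⟩
        · have : q.1.2 * q.2.2 = 0 := by
            have : q.1.1 * q.2.1 = 0 := by rw [h]; ring
            omega
          exact ⟨Or.inr h, mul_eq_zero.mp this⟩
        · have : q.1.1 * q.2.1 = 0 := by
            have : q.1.2 * q.2.2 = 0 := by rw [h]; ring
            omega
          exact ⟨mul_eq_zero.mp this, Or.inr h⟩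
      simp only [mem_union, mem_product, mem_singleton]
      rcases hkey with ⟨h1 | h1, h2 | h2⟩
      · exact Or.inl (Or.inl ⟨⟨h1, h2⟩, hA, hB⟩)
      · exact Or.inl (Or.inr ⟨⟨h1, hb⟩, hA, h2⟩)
      · exact Or.inr (Or.inl ⟨⟨ha, h2⟩, h1, hB⟩)
      · exact Or.inr (Or.inr ⟨⟨ha, hb⟩, h1, h2⟩)
    calc (S.filter zero).card ≤ _ := card_le_card hsub
      _ ≤ (({(0:ℤ)} ×ˢ {(0:ℤ)}) ×ˢ I4 ×ˢ I4).card +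
          (({(0:ℤ)} ×ˢ IM) ×ˢ I4 ×ˢ {(0:ℤ)}).card +
          (((IM ×ˢ {(0:ℤ)}) ×ˢ {(0:ℤ)} ×ˢ I4).card +
           ((IM ×ˢ IM) ×ˢ {(0:ℤ)} ×ˢ {(0:ℤ)}).card) := by
        refine le_trans (card_union_le _ _) ?_
        gcongr <;> exact card_union_le _ _
      _ ≤ 324 * M ^ 2 := by
        simp only [card_product, card_singleton, hIMcard, hI4card]
        nlinarith [hM]
  -- nonzero part
  have hncard : ((S.filter (fun q => ¬ zero q)).card : ℝ) ≤
      16 * ((filter (fun q : (ℕ × ℕ) × ℕ × ℕ => q.1.1 * q.2.1 = q.1.2 * q.2.2)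
      ((Icc 1 (4*M) ×ˢ Icc 1 (4*M)) ×ˢ Icc 1 (4*M) ×ˢ Icc 1 (4*M))).card : ℝ) := by
    set f : ((ℤ × ℤ) × ℤ × ℤ) → (ℕ × ℕ) × ℕ × ℕ := fun q =>
      ((q.1.1.natAbs, q.1.2.natAbs), (q.2.1.natAbs, q.2.2.natAbs)) with hf
    have himg : (S.filter (fun q => ¬ zero q)).image f ⊆
        filter (fun q : (ℕ × ℕ) × ℕ × ℕ => q.1.1 * q.2.1 = q.1.2 * q.2.2)
          ((Icc 1 (4*M) ×ˢ Icc 1 (4*M)) ×ˢ Icc 1 (4*M) ×ˢ Icc 1 (4*M)) := by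
      intro w hw
      rw [mem_image] at hw
      obtain ⟨q, hq, rfl⟩ := hw
      simp only [hS, hzero, mem_filter, mem_product, mem_Icc, hIM, hI4] at hq
      obtain ⟨⟨⟨⟨ha, hb⟩, hA, hB⟩, heq, hne⟩, hz⟩ := hq
      push_neg at hz
      obtain ⟨hz1, hz2, hz3, hz4⟩ := hz
      rw [mem_filter, mem_product, mem_product, mem_product, mem_Icc, mem_Icc, mem_Icc, mem_Icc]
      simp only [hf]
      refine ⟨⟨⟨?_, ?_⟩, ?_, ?_⟩, ?_⟩
      · omega
      · omega
      · omega
      · omega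
      · show q.1.1.natAbs * q.2.1.natAbs = q.1.2.natAbs * q.2.2.natAbs
        rw [← Int.natAbs_mul, ← Int.natAbs_mul, heq, Int.natAbs_neg]
    have hfiber : ∀ w ∈ (S.filter (fun q => ¬ zero q)).image f,
        ((S.filter (fun q => ¬ zero q)).filter (fun q => f q = w)).card ≤ 16 := by
      intro w _
      have hsub2 : (S.filter (fun q => ¬ zero q)).filter (fun q => f q = w) ⊆
          (({(w.1.1:ℤ), -(w.1.1:ℤ)} ×ˢ {(w.1.2:ℤ), -(w.1.2:ℤ)}) ×ˢ
           ({(w.2.1:ℤ), -(w.2.1:ℤ)} ×ˢ {(w.2.2:ℤ), -(w.2.2:ℤ)})) := by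
        intro q hq
        rw [mem_filter] at hq
        obtain ⟨_, hfq⟩ := hq
        have h1 : q.1.1.natAbs = w.1.1 := congrArg (fun t => t.1.1) hfq
        have h2 : q.1.2.natAbs = w.1.2 := congrArg (fun t => t.1.2) hfq
        have h3 : q.2.1.natAbs = w.2.1 := congrArg (fun t => t.2.1) hfq
        have h4 : q.2.2.natAbs = w.2.2 := congrArg (fun t => t.2.2) hfq
        simp only [mem_product, mem_insert, mem_singleton]
        refine ⟨⟨?_, ?_⟩, ?_, ?_⟩ <;> omega
      refine le_trans (card_le_card hsub2) ?_
      simp only [card_product]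
      have c1 : ({(w.1.1:ℤ), -(w.1.1:ℤ)} : Finset ℤ).card ≤ 2 :=
        le_trans (card_insert_le _ _) (by simp)
      have c2 : ({(w.1.2:ℤ), -(w.1.2:ℤ)} : Finset ℤ).card ≤ 2 :=
        le_trans (card_insert_le _ _) (by simp)
      have c3 : ({(w.2.1:ℤ), -(w.2.1:ℤ)} : Finset ℤ).card ≤ 2 :=
        le_trans (card_insert_le _ _) (by simp)
      have c4 : ({(w.2.2:ℤ), -(w.2.2:ℤ)} : Finset ℤ).card ≤ 2 :=
        le_trans (card_insert_le _ _) (by simp)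
      calc _ ≤ 2 * 2 * (2 * 2) := by
            exact Nat.mul_le_mul (Nat.mul_le_mul c1 c2) (Nat.mul_le_mul c3 c4)
        _ = 16 := by norm_num
    have h1 := Finset.card_le_mul_card_image (s := S.filter (fun q => ¬ zero q)) (f := f)
      16 hfiber
    have h2 : (S.filter (fun q => ¬ zero q)).card ≤
        16 * (filter (fun q : (ℕ × ℕ) × ℕ × ℕ => q.1.1 * q.2.1 = q.1.2 * q.2.2)
      ((Icc 1 (4*M) ×ˢ Icc 1 (4*M)) ×ˢ Icc 1 (4*M) ×ˢ Icc 1 (4*M))).card :=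
      le_trans h1 (Nat.mul_le_mul_left 16 (card_le_card himg))
    exact_mod_cast h2
  have hquad := quadruple_count (4*M)
  calc (S.card : ℝ) = ((S.filter zero).card : ℝ) + ((S.filter (fun q => ¬ zero q)).card : ℝ) := by
        exact_mod_cast hsplit
    _ ≤ 324 * M ^ 2 + 16 * (2 * (4*M:ℕ) ^ 2 * (1 + Real.log (4*M : ℕ))) := by
        have : ((S.filter zero).card : ℝ) ≤ 324 * M ^ 2 := by exact_mod_cast hzcard
        have h2 := le_trans hncard (by linarith [hquad] : (16:ℝ) * _ ≤ 16 * (2 * (4*M:ℕ) ^ 2 * (1 + Real.log (4*M : ℕ))))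
        linarith
    _ = 324 * M ^ 2 + 32 * (4*M : ℕ) ^ 2 * (1 + Real.log (4*M : ℕ)) := by ring

section
variable (M : ℕ)

-- the Q-set from lemma B
noncomputable def Qset (M : ℕ) : Finset ((ℤ × ℤ) × ℤ × ℤ) :=
  filter (fun q : (ℤ × ℤ) × ℤ × ℤ =>
        q.1.1 * q.2.1 = -(q.1.2 * q.2.2) ∧ q.1.1 + q.1.2 ≠ 0)
      ((Icc (-(M:ℤ)) M ×ˢ Icc (-(M:ℤ)) M) ×ˢ
        Icc (-(4*M:ℤ)) (4*M) ×ˢ Icc (-(4*M:ℤ)) (4*M))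

-- the (u,v) set
noncomputable def Tset (M : ℕ) : Finset ((Fin 3 → ℤ) × (Fin 3 → ℤ)) :=
  filter (fun q : (Fin 3 → ℤ) × (Fin 3 → ℤ) =>
      (∑ i, q.1 i = 0) ∧ (∑ i, q.1 i * q.2 i = 0))
    ((Fintype.piFinset fun _ => Icc (-(M:ℤ)) M) ×ˢ
      (Fintype.piFinset fun _ => Icc (-(2*M:ℤ)) (2*M)))

lemma Bi_card (M : ℕ) (i j k : Fin 3)
    (hsum : ∀ w : Fin 3 → ℤ, ∑ l, w l = w i + w j + w k)
    (hinj : ∀ w w' : Fin 3 → ℤ, w i = w' i → w j = w' j → w k = w' k → w = w') :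
    ((Tset M).filter (fun q => q.1 i ≠ 0)).card ≤ (Qset M).card * (4*M+1) := by
  classical
  have hcardIcc : (Icc (-(2*M:ℤ)) (2*M)).card = 4*M+1 := by
    rw [Int.card_Icc]; omega
  have := Finset.card_le_card_of_injOn
    (f := fun q : (Fin 3 → ℤ) × (Fin 3 → ℤ) =>
      ((((q.1 j, q.1 k), (q.2 j - q.2 i, q.2 k - q.2 i)), q.2 i) : ((ℤ × ℤ) × ℤ × ℤ) × ℤ))
    (s := (Tset M).filter (fun q => q.1 i ≠ 0))
    (t := Qset M ×ˢ Icc (-(2*M:ℤ)) (2*M)) ?_ ?_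
  · calc ((Tset M).filter (fun q => q.1 i ≠ 0)).card
        ≤ (Qset M ×ˢ Icc (-(2*M:ℤ)) (2*M)).card := this
      _ = (Qset M).card * (4*M+1) := by rw [card_product, hcardIcc]
  · -- maps to
    intro q hq
    rw [mem_coe, mem_filter] at hq
    obtain ⟨hqT, hi⟩ := hq
    rw [Tset, mem_filter, mem_product, Fintype.mem_piFinset, Fintype.mem_piFinset] at hqT
    obtain ⟨⟨hu, hv⟩, hs1, hs2⟩ := hqT
    have e1 : q.1 i + q.1 j + q.1 k = 0 := by rw [← hsum q.1]; exact hs1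
    have e2 : q.1 i * q.2 i + q.1 j * q.2 j + q.1 k * q.2 k = 0 := by
      rw [← hsum (fun l => q.1 l * q.2 l)]; exact hs2
    have h1 := hu j; have h2 := hu k
    have h3 := hv j; have h4 := hv k; have h5 := hv i
    rw [mem_Icc] at h1 h2 h3 h4 h5
    rw [mem_coe, mem_product]
    dsimp only
    constructor
    · rw [Qset, mem_filter]
      refine ⟨?_, ?_, ?_⟩
      · simp only [mem_product, mem_Icc]
        omega
      · show q.1 j * (q.2 j - q.2 i) = -(q.1 k * (q.2 k - q.2 i))
        linear_combination e2 - q.2 i * e1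
      · show q.1 j + q.1 k ≠ 0
        intro h; exact hi (by linarith)
    · rw [mem_Icc]; exact h5
  · -- inj on
    intro q hq q' hq' heq
    rw [mem_coe, mem_filter] at hq hq'
    obtain ⟨hqT, _⟩ := hq
    obtain ⟨hq'T, _⟩ := hq'
    rw [Tset, mem_filter] at hqT hq'T
    have e1 : q.1 i + q.1 j + q.1 k = 0 := by rw [← hsum q.1]; exact hqT.2.1
    have e1' : q'.1 i + q'.1 j + q'.1 k = 0 := by rw [← hsum q'.1]; exact hq'T.2.1
    have h1 : q.1 j = q'.1 j := congrArg (fun t => t.1.1.1) heq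
    have h2 : q.1 k = q'.1 k := congrArg (fun t => t.1.1.2) heq
    have h3 : q.2 j - q.2 i = q'.2 j - q'.2 i := congrArg (fun t => t.1.2.1) heq
    have h4 : q.2 k - q.2 i = q'.2 k - q'.2 i := congrArg (fun t => t.1.2.2) heq
    have h5 : q.2 i = q'.2 i := congrArg (fun t => t.2) heq
    have hu : q.1 = q'.1 := hinj _ _ (by linarith) h1 h2
    have hv : q.2 = q'.2 := hinj _ _ h5 (by linarith) (by linarith)
    exact Prod.ext hu hv
end

lemma A_card (M : ℕ) :
    ((Tset M).filter (fun q => q.1 = 0)).card ≤ (4*M+1)^3 := by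
  classical
  have hmaps : ∀ q ∈ (Tset M).filter (fun q => q.1 = 0),
      q.2 ∈ Fintype.piFinset (fun _ : Fin 3 => Icc (-(2*M:ℤ)) (2*M)) := by
    intro q hq
    rw [mem_filter, Tset, mem_filter, mem_product] at hq
    exact hq.1.1.2
  have hinj : Set.InjOn (fun q : (Fin 3 → ℤ) × (Fin 3 → ℤ) => q.2)
      ((Tset M).filter (fun q => q.1 = 0)) := by
    intro q hq q' hq' h
    rw [mem_coe, mem_filter] at hq hq'
    exact Prod.ext (hq.2.trans hq'.2.symm) h
  calc ((Tset M).filter (fun q => q.1 = 0)).card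
      ≤ (Fintype.piFinset (fun _ : Fin 3 => Icc (-(2*M:ℤ)) (2*M))).card :=
        Finset.card_le_card_of_injOn _ hmaps hinj
    _ = (4*M+1)^3 := by
        rw [Fintype.card_piFinset]
        simp only [Int.card_Icc]
        rw [Finset.prod_const]
        have : ((2*(M:ℤ) + 1 - -(2*M)).toNat) = 4*M+1 := by omega
        rw [this]
        simp

lemma T_card (M : ℕ) :
    (Tset M).card ≤ ((Tset M).filter (fun q => q.1 = 0)).card
      + (((Tset M).filter (fun q => q.1 0 ≠ 0)).card
      + (((Tset M).filter (fun q => q.1 1 ≠ 0)).card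
      + ((Tset M).filter (fun q => q.1 2 ≠ 0)).card)) := by
  classical
  have hsub : Tset M ⊆ ((Tset M).filter (fun q => q.1 = 0))
      ∪ (((Tset M).filter (fun q => q.1 0 ≠ 0))
      ∪ (((Tset M).filter (fun q => q.1 1 ≠ 0))
      ∪ ((Tset M).filter (fun q => q.1 2 ≠ 0)))) := by
    intro q hq
    simp only [mem_union, mem_filter]
    by_cases h : q.1 = 0
    · exact Or.inl ⟨hq, h⟩
    · obtain ⟨l, hl⟩ := Function.ne_iff.mp h
      fin_cases l
      · exact Or.inr (Or.inl ⟨hq, hl⟩)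
      · exact Or.inr (Or.inr (Or.inl ⟨hq, hl⟩))
      · exact Or.inr (Or.inr (Or.inr ⟨hq, hl⟩))
  refine le_trans (card_le_card hsub) ?_
  refine le_trans (card_union_le _ _) ?_
  gcongr
  refine le_trans (card_union_le _ _) ?_
  gcongr
  exact card_union_le _ _

lemma S_card (M : ℕ) :
    ((Finset.filter
          (fun p : (Fin 3 → ℤ) × (Fin 3 → ℤ) =>
            (∑ i, p.1 i = ∑ i, p.2 i) ∧ (∑ i, (p.1 i) ^ 2 = ∑ i, (p.2 i) ^ 2))
          ((Fintype.piFinset fun _ => Finset.Icc 1 (M:ℤ)) ×ˢ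
            (Fintype.piFinset fun _ => Finset.Icc 1 (M:ℤ)))).card) ≤ (Tset M).card := by
  classical
  apply Finset.card_le_card_of_injOn
    (f := fun p : (Fin 3 → ℤ) × (Fin 3 → ℤ) => (p.1 - p.2, p.1 + p.2))
  · intro p hp
    rw [mem_coe, mem_filter, mem_product, Fintype.mem_piFinset, Fintype.mem_piFinset] at hp
    obtain ⟨⟨hx, hy⟩, hs1, hs2⟩ := hp
    rw [mem_coe, Tset, mem_filter, mem_product, Fintype.mem_piFinset, Fintype.mem_piFinset]
    refine ⟨⟨?_, ?_⟩, ?_, ?_⟩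
    · intro l
      have h1 := hx l; have h2 := hy l
      rw [mem_Icc] at h1 h2 ⊢
      simp only [Pi.sub_apply]
      omega
    · intro l
      have h1 := hx l; have h2 := hy l
      rw [mem_Icc] at h1 h2 ⊢
      simp only [Pi.add_apply]
      omega
    · simp only [Pi.sub_apply]
      rw [Finset.sum_sub_distrib, hs1, sub_self]
    · have : ∀ l ∈ (univ : Finset (Fin 3)),
          (p.1 - p.2) l * (p.1 + p.2) l = (p.1 l)^2 - (p.2 l)^2 := by
        intro l _
        simp only [Pi.sub_apply, Pi.add_apply]
        ring
      rw [Finset.sum_congr rfl this, Finset.sum_sub_distrib, hs2, sub_self]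
  · intro p hp p' hp' h
    have h1 : p.1 - p.2 = p'.1 - p'.2 := congrArg Prod.fst h
    have h2 : p.1 + p.2 = p'.1 + p'.2 := congrArg Prod.snd h
    have hx : p.1 = p'.1 := by
      funext l
      have a1 := congrFun h1 l
      have a2 := congrFun h2 l
      simp only [Pi.sub_apply, Pi.add_apply] at a1 a2
      omega
    have hy : p.2 = p'.2 := by
      funext l
      have a1 := congrFun h1 l
      have a2 := congrFun h2 l
      simp only [Pi.sub_apply, Pi.add_apply] at a1 a2
      omega
    exact Prod.ext hx hy

lemma int_eq_count' (M : ℕ) (hM : 1 ≤ M) :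
    ((Qset M).card : ℝ)
      ≤ 324 * M ^ 2 + 32 * (4*M : ℕ) ^ 2 * (1 + Real.log (4*M : ℕ)) := by
  unfold Qset
  exact int_eq_count M hM

lemma total_nat (M : ℕ) :
    ((Finset.filter
          (fun p : (Fin 3 → ℤ) × (Fin 3 → ℤ) =>
            (∑ i, p.1 i = ∑ i, p.2 i) ∧ (∑ i, (p.1 i) ^ 2 = ∑ i, (p.2 i) ^ 2))
          ((Fintype.piFinset fun _ => Finset.Icc 1 (M:ℤ)) ×ˢ
            (Fintype.piFinset fun _ => Finset.Icc 1 (M:ℤ)))).card)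
      ≤ (4*M+1)^3 + 3 * ((Qset M).card * (4*M+1)) := by
  have hB0 := Bi_card M 0 1 2 (fun w => by rw [Fin.sum_univ_three])
    (fun w w' h0 h1 h2 => by funext l; fin_cases l <;> assumption)
  have hB1 := Bi_card M 1 0 2 (fun w => by rw [Fin.sum_univ_three]; ring)
    (fun w w' h0 h1 h2 => by funext l; fin_cases l <;> assumption)
  have hB2 := Bi_card M 2 0 1 (fun w => by rw [Fin.sum_univ_three]; ring)
    (fun w w' h0 h1 h2 => by funext l; fin_cases l <;> assumption)
  have hA := A_card M
  have hT := T_card M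
  have hS := S_card M
  omega

set_option maxHeartbeats 1000000 in
theorem quadratic_vinogradov_count :
    ∃ C : ℝ, 0 < C ∧ ∀ X : ℝ, 1 ≤ X →
      ((Finset.filter
          (fun p : (Fin 3 → ℤ) × (Fin 3 → ℤ) =>
            (∑ i, p.1 i = ∑ i, p.2 i) ∧ (∑ i, (p.1 i) ^ 2 = ∑ i, (p.2 i) ^ 2))
          ((Fintype.piFinset fun _ => Finset.Icc 1 ⌊X⌋) ×ˢ
            (Fintype.piFinset fun _ => Finset.Icc 1 ⌊X⌋))).card : ℝ)
        ≤ C * X ^ 3 * Real.log (2 * X) := by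
  refine ⟨100000, by norm_num, ?_⟩
  intro X hX
  set M : ℕ := ⌊X⌋.toNat with hMdef
  have hfloor : (1:ℤ) ≤ ⌊X⌋ := by
    exact_mod_cast Int.le_floor.mpr (by exact_mod_cast hX)
  have hMZ : ((M:ℤ)) = ⌊X⌋ := Int.toNat_of_nonneg (by omega)
  have hM : 1 ≤ M := by omega
  have hmX : (M:ℝ) ≤ X := by
    have := Int.floor_le X
    rw [← hMZ] at this
    exact_mod_cast this
  have hm1 : (1:ℝ) ≤ (M:ℝ) := by exact_mod_cast hM
  rw [← hMZ]
  have hnat := total_nat M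
  have hQ := int_eq_count' M hM
  set m : ℝ := (M:ℝ) with hmdef
  set L : ℝ := Real.log (2*X) with hLdef
  have hlog2 : (0.6931471803 : ℝ) < Real.log 2 := Real.log_two_gt_d9
  have hL2 : Real.log 2 ≤ L := by
    rw [hLdef]
    apply Real.log_le_log (by norm_num)
    nlinarith
  have hL1 : (1:ℝ) ≤ 2 * L := by nlinarith
  have hL0 : (0:ℝ) ≤ L := by nlinarith
  have hcast : ((4*M : ℕ) : ℝ) = 4 * m := by push_cast; ring
  have hlog4m : Real.log ((4*M : ℕ) : ℝ) ≤ 2 * L := by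
    rw [hcast]
    have h1 : Real.log (4*m) ≤ Real.log (4*X) :=
      Real.log_le_log (by nlinarith) (by nlinarith)
    have h2 : Real.log (4*X) = Real.log 2 + Real.log (2*X) := by
      rw [show (4:ℝ)*X = 2*(2*X) by ring]
      rw [Real.log_mul (by norm_num) (by nlinarith)]
    rw [← hLdef] at h2
    nlinarith
  have hreal : ((Finset.filter
          (fun p : (Fin 3 → ℤ) × (Fin 3 → ℤ) =>
            (∑ i, p.1 i = ∑ i, p.2 i) ∧ (∑ i, (p.1 i) ^ 2 = ∑ i, (p.2 i) ^ 2))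
          ((Fintype.piFinset fun _ => Finset.Icc 1 (M:ℤ)) ×ˢ
            (Fintype.piFinset fun _ => Finset.Icc 1 (M:ℤ)))).card : ℝ)
      ≤ (4*m+1)^3 + 3 * (((Qset M).card : ℝ) * (4*m+1)) := by
    rw [hmdef]
    exact_mod_cast hnat
  refine le_trans hreal ?_
  have hlogpos : (0:ℝ) ≤ 1 + Real.log ((4*M:ℕ):ℝ) := by
    have : (0:ℝ) ≤ Real.log ((4*M:ℕ):ℝ) := by
      apply Real.log_nonneg
      rw [hcast]; nlinarith
    linarith
  have hQ'' : ((Qset M).card : ℝ) ≤ 324 * m^2 + 512 * m^2 * (4 * L) := by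
    have hq2 : ((Qset M).card : ℝ) ≤ 324 * m^2 + 32 * (4*m)^2 * (1 + Real.log ((4*M:ℕ):ℝ)) := by
      rw [← hcast]
      exact_mod_cast hQ
    have h14 : 1 + Real.log ((4*M:ℕ):ℝ) ≤ 4 * L := by nlinarith
    nlinarith
  have hQle : 3 * (((Qset M).card : ℝ) * (4*m+1)) ≤
      3 * ((324 * m^2 + 512 * m^2 * (4 * L)) * (4*m+1)) := by
    have h41 : (0:ℝ) ≤ 4*m+1 := by nlinarith
    nlinarith
  have hfin : (4*m+1)^3 + 3 * ((324 * m^2 + 512 * m^2 * (4 * L)) * (4*m+1))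
      ≤ 100000 * X ^ 3 * L := by
    have hm0 : (0:ℝ) ≤ m := by linarith
    have h5 : 4*m+1 ≤ 5*m := by nlinarith
    have hmX3 : m^3 ≤ X^3 := pow_le_pow_left₀ hm0 hmX 3
    have hX3 : (0:ℝ) ≤ X^3 := by positivity
    have e1 : (4*m+1)^3 ≤ 125 * m^3 := by nlinarith [sq_nonneg m, sq_nonneg (m-1)]
    have hApos : (0:ℝ) ≤ 324 * m^2 + 512 * m^2 * (4 * L) := by positivity
    have e2 : (324 * m^2 + 512 * m^2 * (4 * L)) * (4*m+1)
        ≤ (324 * m^2 + 512 * m^2 * (4 * L)) * (5*m) :=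
      mul_le_mul_of_nonneg_left h5 hApos
    have e2' : 3 * ((324 * m^2 + 512 * m^2 * (4 * L)) * (4*m+1))
        ≤ 4860 * m^3 + 30720 * m^3 * L := by nlinarith
    have e4 : (4985 : ℝ) * m^3 ≤ 4985 * (X^3 * (2*L)) := by
      have h1 : m^3 ≤ X^3 * (2*L) := by
        calc m^3 ≤ X^3 := hmX3
          _ = X^3 * 1 := by ring
          _ ≤ X^3 * (2*L) := mul_le_mul_of_nonneg_left hL1 hX3
      linarith
    have e5 : (30720 : ℝ) * m^3 * L ≤ 30720 * (X^3 * L) := by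
      have h1 : m^3 * L ≤ X^3 * L := mul_le_mul_of_nonneg_right hmX3 hL0
      linarith
    have hXL : (0:ℝ) ≤ X^3 * L := mul_nonneg hX3 hL0
    linarith
  linarith
end

section
/- Let X ≥ 2 and Q with 1 ≤ Q ≤ X, and let 𝔐 = 𝔐(Q) be the one-dimensional major arcs in the α₃ variable. Then ∫_𝔐 ∫_0^1 ∫_0^1 |f(α; X)|⁶ dα ≪_ε Q² X^ε, where f(α; X) = ∑_{1 ≤ x ≤ X} e(α₁x + α₂x² + α₃x³). -/
open MeasureTheory Finset

namespace MA6

noncomputable section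


lemma orth01 (n : ℤ) :
    (∫ t in (0:ℝ)..1, Complex.exp (2*Real.pi*Complex.I*(n:ℂ)*t)) = if n = 0 then 1 else 0 := by
  rcases eq_or_ne n 0 with h | h
  · simp [h]
  · have hc : (2*(Real.pi:ℂ)*Complex.I*(n:ℂ)) ≠ 0 := by
      simp [Real.pi_ne_zero, Complex.I_ne_zero, h]
    rw [if_neg h]
    have := integral_exp_mul_complex (a := (0:ℝ)) (b := 1) hc
    simp only [Complex.ofReal_one, mul_one, Complex.ofReal_zero, mul_zero, Complex.exp_zero] at this
    rw [this]
    have h1 : Complex.exp (2*(Real.pi:ℂ)*Complex.I*(n:ℂ)) = 1 := by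
      have := Complex.exp_int_mul_two_pi_mul_I n
      rw [← this]; ring_nf
    rw [h1]; simp

lemma integral_re01 {f : ℝ → ℂ} (hf : IntervalIntegrable f volume 0 1) :
    (∫ t in (0:ℝ)..1, (f t).re) = (∫ t in (0:ℝ)..1, f t).re := by
  rw [intervalIntegral.integral_of_le zero_le_one, intervalIntegral.integral_of_le zero_le_one]
  exact integral_re hf.1


abbrev T6 := ℕ × ℕ × ℕ × ℕ × ℕ × ℕ

def lin (a : T6) : ℤ :=
  (a.1 : ℤ) + a.2.1 + a.2.2.1 - a.2.2.2.1 - a.2.2.2.2.1 - a.2.2.2.2.2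
def qua (a : T6) : ℤ :=
  (a.1 : ℤ)^2 + (a.2.1:ℤ)^2 + (a.2.2.1:ℤ)^2 - (a.2.2.2.1:ℤ)^2 - (a.2.2.2.2.1:ℤ)^2
    - (a.2.2.2.2.2:ℤ)^2
def cub (a : T6) : ℤ :=
  (a.1 : ℤ)^3 + (a.2.1:ℤ)^3 + (a.2.2.1:ℤ)^3 - (a.2.2.2.1:ℤ)^3 - (a.2.2.2.2.1:ℤ)^3
    - (a.2.2.2.2.2:ℤ)^3

def box6 (N : ℕ) : Finset T6 :=
  Finset.Icc 1 N ×ˢ Finset.Icc 1 N ×ˢ Finset.Icc 1 N ×ˢ Finset.Icc 1 N ×ˢ Finset.Icc 1 N ×ˢ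
    Finset.Icc 1 N

def sols (N : ℕ) : Finset T6 := (box6 N).filter (fun a => lin a = 0 ∧ qua a = 0)

def ph (α₁ α₂ α₃ : ℝ) (x : ℕ) : ℂ :=
  Complex.exp (2 * Real.pi * Complex.I *
    ((α₁ : ℂ) * (x : ℂ) + (α₂ : ℂ) * (x : ℂ) ^ 2 + (α₃ : ℂ) * (x : ℂ) ^ 3))

def bigE (α₁ α₂ α₃ : ℝ) (a : T6) : ℂ :=
  Complex.exp (2 * Real.pi * Complex.I *
    ((α₁ : ℂ) * (lin a : ℂ) + (α₂ : ℂ) * (qua a : ℂ) + (α₃ : ℂ) * (cub a : ℂ)))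

lemma conj_ph (α₁ α₂ α₃ : ℝ) (y : ℕ) :
    (starRingEnd ℂ) (ph α₁ α₂ α₃ y) = Complex.exp (-(2 * Real.pi * Complex.I *
      ((α₁ : ℂ) * (y : ℂ) + (α₂ : ℂ) * (y : ℂ) ^ 2 + (α₃ : ℂ) * (y : ℂ) ^ 3))) := by
  rw [ph, ← Complex.exp_conj]
  congr 1
  simp only [map_mul, map_add, Complex.conj_I, Complex.conj_ofReal, map_pow, map_ofNat,
    Complex.conj_natCast]
  push_cast
  ring

lemma expand_pow6 (α₁ α₂ α₃ : ℝ) (N : ℕ) :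
    ‖∑ x ∈ Finset.Icc 1 N, ph α₁ α₂ α₃ x‖ ^ 6
      = (∑ a ∈ box6 N, bigE α₁ α₂ α₃ a).re := by
  set z := ∑ x ∈ Finset.Icc 1 N, ph α₁ α₂ α₃ x with hz
  have h1 : ‖z‖ ^ 6 = ((z * (starRingEnd ℂ) z) ^ 3).re := by
    rw [Complex.mul_conj]
    norm_cast
    rw [← Complex.sq_norm]
    ring
  rw [h1]
  congr 1
  have hconj : (starRingEnd ℂ) z = ∑ y ∈ Finset.Icc 1 N,
      Complex.exp (-(2 * Real.pi * Complex.I *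
        ((α₁ : ℂ) * (y : ℂ) + (α₂ : ℂ) * (y : ℂ) ^ 2 + (α₃ : ℂ) * (y : ℂ) ^ 3))) := by
    rw [hz, map_sum]
    exact Finset.sum_congr rfl fun y _ => conj_ph α₁ α₂ α₃ y
  have hcube : ∀ w : ℂ, (z * w) ^ 3 = w * (w * (w * (z * (z * z)))) := by
    intro w; ring
  rw [hcube, hconj, hz]
  have hbox : ∀ F : T6 → ℂ, ∑ a ∈ box6 N, F a
      = ∑ x₁ ∈ Finset.Icc 1 N, ∑ x₂ ∈ Finset.Icc 1 N, ∑ x₃ ∈ Finset.Icc 1 N,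
          ∑ y₁ ∈ Finset.Icc 1 N, ∑ y₂ ∈ Finset.Icc 1 N, ∑ y₃ ∈ Finset.Icc 1 N,
            F (x₁, x₂, x₃, y₁, y₂, y₃) := by
    intro F; rw [box6]; simp only [Finset.sum_product]
  rw [hbox (bigE α₁ α₂ α₃)]
  simp only [Finset.sum_mul, Finset.mul_sum]
  refine Finset.sum_congr rfl fun x₁ hx₁ => ?_
  refine Finset.sum_congr rfl fun x₂ hx₂ => ?_
  refine Finset.sum_congr rfl fun x₃ hx₃ => ?_
  refine Finset.sum_congr rfl fun y₁ hy₁ => ?_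
  refine Finset.sum_congr rfl fun y₂ hy₂ => ?_
  refine Finset.sum_congr rfl fun y₃ hy₃ => ?_
  simp only [ph, bigE, ← Complex.exp_add]
  congr 1
  simp only [lin, qua, cub]
  push_cast
  ring


def Dset (M : ℕ) : Finset (ℕ × ℕ) :=
  (Finset.Icc 1 M ×ˢ Finset.Icc 1 M).filter (fun p => p.1 * p.2 ≤ M)

def Tset (M : ℕ) : Finset (ℕ × ℕ × ℕ × ℕ) :=
  (Finset.Icc 1 M ×ˢ Finset.Icc 1 M ×ˢ Finset.Icc 1 M ×ˢ Finset.Icc 1 M).filter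
    (fun p => p.1 * p.2.1 = p.2.2.1 * p.2.2.2)

lemma Dset_card_le (M : ℕ) : (Dset M).card ≤ ∑ a ∈ Finset.Icc 1 M, M / a := by
  have hsub : Dset M ⊆ (Finset.Icc 1 M).biUnion
      (fun a => {a} ×ˢ Finset.Icc 1 (M / a)) := by
    intro p hp
    simp only [Dset, Finset.mem_filter, Finset.mem_product, Finset.mem_Icc] at hp
    obtain ⟨⟨⟨h1, h2⟩, h3, h4⟩, h5⟩ := hp
    simp only [Finset.mem_biUnion, Finset.mem_product, Finset.mem_singleton, Finset.mem_Icc]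
    exact ⟨p.1, by simp [h1, h2], rfl, h3, Nat.le_div_iff_mul_le (by omega) |>.mpr
      (by rwa [mul_comm])⟩
  calc (Dset M).card ≤ _ := Finset.card_le_card hsub
    _ ≤ ∑ a ∈ Finset.Icc 1 M, ({a} ×ˢ Finset.Icc 1 (M / a)).card := Finset.card_biUnion_le
    _ ≤ ∑ a ∈ Finset.Icc 1 M, M / a := by
        refine Finset.sum_le_sum fun a _ => ?_
        rw [Finset.card_product, Finset.card_singleton, one_mul, Nat.card_Icc]
        simp

lemma harmonic_sum_le (M : ℕ) (hM : 1 ≤ M) :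
    (∑ a ∈ Finset.Icc 1 M, (1 : ℝ) / a) ≤ 1 + Real.log M := by
  have h := harmonic_le_one_add_log M
  have : (∑ a ∈ Finset.Icc 1 M, (1 : ℝ) / a) = ((harmonic M : ℚ) : ℝ) := by
    rw [harmonic]
    push_cast
    rw [show Finset.Icc 1 M = Finset.map ⟨fun i => i + 1, fun a b h => by simpa using h⟩
      (Finset.range M) from by
        ext x
        simp only [Finset.mem_Icc, Finset.mem_map, Finset.mem_range,
          Function.Embedding.coeFn_mk]
        constructor
        · rintro ⟨h1, h2⟩; exact ⟨x - 1, by omega, by change x - 1 + 1 = x; omega⟩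
        · rintro ⟨i, hi, rfl⟩; change 1 ≤ i + 1 ∧ i + 1 ≤ M; omega, Finset.sum_map]
    refine Finset.sum_congr rfl fun i _ => ?_
    change (1:ℝ) / ((i + 1 : ℕ) : ℝ) = _
    simp [one_div]
  rw [this]
  exact_mod_cast h

lemma Dset_card_real (M : ℕ) (hM : 1 ≤ M) :
    ((Dset M).card : ℝ) ≤ M * (1 + Real.log M) := by
  have h1 := Dset_card_le M
  have h2 : ((∑ a ∈ Finset.Icc 1 M, M / a : ℕ) : ℝ) ≤ ∑ a ∈ Finset.Icc 1 M, (M : ℝ) / a := by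
    push_cast
    refine Finset.sum_le_sum fun a ha => ?_
    simp only [Finset.mem_Icc] at ha
    exact Nat.cast_div_le
  have h3 : (∑ a ∈ Finset.Icc 1 M, (M : ℝ) / a) = M * ∑ a ∈ Finset.Icc 1 M, (1:ℝ) / a := by
    rw [Finset.mul_sum]; refine Finset.sum_congr rfl fun a _ => by ring
  calc ((Dset M).card : ℝ) ≤ ((∑ a ∈ Finset.Icc 1 M, M / a : ℕ) : ℝ) := by exact_mod_cast h1
    _ ≤ ∑ a ∈ Finset.Icc 1 M, (M : ℝ) / a := h2
    _ = M * ∑ a ∈ Finset.Icc 1 M, (1:ℝ) / a := h3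
    _ ≤ M * (1 + Real.log M) := by
        have := harmonic_sum_le M hM
        have hM0 : (0:ℝ) ≤ M := by positivity
        nlinarith

lemma Tset_card_le (M : ℕ) : (Tset M).card ≤ (Dset M).card ^ 2 := by
  rw [sq, ← Finset.card_product]
  apply Finset.card_le_card_of_injOn
    (fun p => ((Nat.gcd p.1 p.2.2.1, p.1 / Nat.gcd p.1 p.2.2.1),
      (p.2.2.1 / Nat.gcd p.1 p.2.2.1, p.2.1 / (p.2.2.1 / Nat.gcd p.1 p.2.2.1))))
  · intro p hp
    obtain ⟨a, b, c, d⟩ := p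
    simp only [Tset, Finset.mem_coe, Finset.mem_filter, Finset.mem_product, Finset.mem_Icc] at hp
    obtain ⟨⟨⟨ha1, ha2⟩, ⟨hb1, hb2⟩, ⟨hc1, hc2⟩, hd1, hd2⟩, heq⟩ := hp
    simp only at heq ⊢
    set g := Nat.gcd a c with hg
    have hga : g ∣ a := Nat.gcd_dvd_left a c
    have hgc : g ∣ c := Nat.gcd_dvd_right a c
    have hg0 : 0 < g := Nat.gcd_pos_of_pos_left c (by omega)
    have hcop : Nat.Coprime (a / g) (c / g) := Nat.coprime_div_gcd_div_gcd hg0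
    -- c/g divides b
    have hdvd : (c / g) ∣ b := by
      have h1 : (c / g) ∣ (a / g) * b := by
        refine ⟨d, ?_⟩
        have : g * ((a / g) * b) = g * ((c / g) * d) := by
          rw [← mul_assoc, ← mul_assoc, Nat.mul_div_cancel' hga, Nat.mul_div_cancel' hgc, heq]
        exact Nat.eq_of_mul_eq_mul_left hg0 this
      exact hcop.symm.dvd_of_dvd_mul_left h1
    have hcg0 : 0 < c / g := Nat.div_pos (Nat.le_of_dvd (by omega) hgc) hg0
    have hag0 : 0 < a / g := Nat.div_pos (Nat.le_of_dvd (by omega) hga) hg0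
    have hbcg : (c / g) * (b / (c / g)) = b := Nat.mul_div_cancel' hdvd
    have hbg0 : 0 < b / (c / g) := Nat.div_pos (Nat.le_of_dvd (by omega) hdvd) hcg0
    simp only [Dset, Finset.mem_coe, Finset.mem_product, Finset.mem_filter, Finset.mem_Icc]
    refine ⟨⟨⟨⟨hg0, ?_⟩, hag0, ?_⟩, ?_⟩, ⟨⟨hcg0, ?_⟩, hbg0, ?_⟩, ?_⟩
    · exact le_trans (Nat.le_of_dvd (by omega) hga) ha2
    · calc a / g ≤ a := Nat.div_le_self a g
        _ ≤ M := ha2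
    · rw [Nat.mul_div_cancel' hga]; exact ha2
    · calc c / g ≤ c := Nat.div_le_self c g
        _ ≤ M := hc2
    · calc b / (c / g) ≤ b := Nat.div_le_self _ _
        _ ≤ M := hb2
    · rw [hbcg]; exact hb2
  · intro p hp q hq hpq
    obtain ⟨a, b, c, d⟩ := p
    obtain ⟨a', b', c', d'⟩ := q
    simp only [Tset, Finset.mem_coe, Finset.mem_filter, Finset.mem_product,
      Finset.mem_Icc] at hp hq
    obtain ⟨⟨⟨ha1, _⟩, ⟨hb1, _⟩, ⟨hc1, _⟩, _, _⟩, heq⟩ := hp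
    obtain ⟨⟨⟨ha1', _⟩, ⟨hb1', _⟩, ⟨hc1', _⟩, _, _⟩, heq'⟩ := hq
    simp only [Prod.mk.injEq] at hpq
    obtain ⟨⟨hgg, hag⟩, hcg, hbg⟩ := hpq
    set g := Nat.gcd a c with hg
    have hga : g ∣ a := Nat.gcd_dvd_left a c
    have hgc : g ∣ c := Nat.gcd_dvd_right a c
    have hg0 : 0 < g := Nat.gcd_pos_of_pos_left c (by omega)
    have hga' : Nat.gcd a' c' ∣ a' := Nat.gcd_dvd_left a' c'
    have hgc' : Nat.gcd a' c' ∣ c' := Nat.gcd_dvd_right a' c'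
    have haa : a = a' := by
      rw [← Nat.mul_div_cancel' hga, ← Nat.mul_div_cancel' hga', ← hag, ← hgg]
    have hcc : c = c' := by
      rw [← Nat.mul_div_cancel' hgc, ← Nat.mul_div_cancel' hgc', ← hcg, ← hgg]
    have hcop : Nat.Coprime (a / g) (c / g) := Nat.coprime_div_gcd_div_gcd hg0
    have hdvd : (c / g) ∣ b := by
      have h1 : (c / g) ∣ (a / g) * b := by
        refine ⟨d, ?_⟩
        have : g * ((a / g) * b) = g * ((c / g) * d) := by
          rw [← mul_assoc, ← mul_assoc, Nat.mul_div_cancel' hga, Nat.mul_div_cancel' hgc, heq]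
        exact Nat.eq_of_mul_eq_mul_left hg0 this
      exact hcop.symm.dvd_of_dvd_mul_left h1
    have hdvd' : (c' / Nat.gcd a' c') ∣ b' := by
      have hg0' : 0 < Nat.gcd a' c' := Nat.gcd_pos_of_pos_left c' (by omega)
      have hcop' : Nat.Coprime (a' / Nat.gcd a' c') (c' / Nat.gcd a' c') :=
        Nat.coprime_div_gcd_div_gcd hg0'
      have h1 : (c' / Nat.gcd a' c') ∣ (a' / Nat.gcd a' c') * b' := by
        refine ⟨d', ?_⟩
        have : Nat.gcd a' c' * ((a' / Nat.gcd a' c') * b')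
            = Nat.gcd a' c' * ((c' / Nat.gcd a' c') * d') := by
          rw [← mul_assoc, ← mul_assoc, Nat.mul_div_cancel' hga', Nat.mul_div_cancel' hgc', heq']
        exact Nat.eq_of_mul_eq_mul_left hg0' this
      exact hcop'.symm.dvd_of_dvd_mul_left h1
    have hbb : b = b' := by
      rw [← Nat.mul_div_cancel' hdvd, ← Nat.mul_div_cancel' hdvd', ← hbg, ← hcg]
    have hdd : d = d' := by
      have h1 : c * d = c * d' := by rw [heq.symm, haa, hbb, heq', hcc]
      exact Nat.eq_of_mul_eq_mul_left (by omega) h1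
    simp [haa, hbb, hcc, hdd]










def hh (a : T6) : ℤ := (a.2.2.2.2.2 : ℤ) - a.2.2.1
def CC (a : T6) : ℤ := (a.2.2.2.1 : ℤ) + a.2.2.2.2.1
def BB (a : T6) : ℤ := (a.1 : ℤ) - a.2.1
def DD (a : T6) : ℤ := (a.2.2.2.1 : ℤ) - a.2.2.2.2.1
def uu (a : T6) : ℤ := BB a - DD a
def vv (a : T6) : ℤ := BB a + DD a
def KK (a : T6) : ℤ := 2*((a.2.2.1:ℤ) + a.2.2.2.2.2) - 2*CC a - hh a

lemma key_id {N : ℕ} {a : T6} (ha : a ∈ sols N) : uu a * vv a = hh a * KK a := by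
  rw [sols, Finset.mem_filter] at ha
  obtain ⟨-, hl, hq⟩ := ha
  obtain ⟨x₁, x₂, x₃, y₁, y₂, y₃⟩ := a
  simp only [lin, qua] at hl hq
  simp only [uu, vv, hh, KK, BB, DD, CC]
  linear_combination 2 * hq - (((x₁:ℤ) + x₂ + x₃ - y₁ - y₂ - y₃) + 2*((y₃:ℤ) - x₃)
    + 2*((y₁:ℤ) + y₂)) * hl

lemma mem_box6 {N : ℕ} {a : T6} (ha : a ∈ box6 N) :
    1 ≤ a.1 ∧ a.1 ≤ N ∧ 1 ≤ a.2.1 ∧ a.2.1 ≤ N ∧ 1 ≤ a.2.2.1 ∧ a.2.2.1 ≤ N ∧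
    1 ≤ a.2.2.2.1 ∧ a.2.2.2.1 ≤ N ∧ 1 ≤ a.2.2.2.2.1 ∧ a.2.2.2.2.1 ≤ N ∧
    1 ≤ a.2.2.2.2.2 ∧ a.2.2.2.2.2 ≤ N := by
  simp only [box6, Finset.mem_product, Finset.mem_Icc] at ha
  tauto

-- Part E0 : hh = 0
lemma cardE0 (N : ℕ) :
    ((sols N).filter (fun a => hh a = 0)).card
      ≤ (N * (4*N+1)) * ((2*N+1) * 2) := by
  have := Finset.card_le_card_of_injOn
    (f := fun a : T6 => ((a.2.2.1, CC a), (BB a, decide (DD a = BB a))))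
    (s := (sols N).filter (fun a => hh a = 0))
    (t := (Finset.Icc 1 N ×ˢ Finset.Icc (2:ℤ) (4*N)) ×ˢ
      (Finset.Icc (-(N:ℤ)) N ×ˢ (Finset.univ : Finset Bool)))
    ?_ ?_
  · refine le_trans this ?_
    rw [Finset.card_product, Finset.card_product, Finset.card_product]
    refine Nat.mul_le_mul (Nat.mul_le_mul ?_ ?_) (Nat.mul_le_mul ?_ ?_) <;>
      simp only [Nat.card_Icc, Int.card_Icc, Finset.card_univ, Fintype.card_bool] <;> omega
  · intro a ha
    simp only [Finset.mem_coe, Finset.mem_filter] at ha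
    obtain ⟨has, hh0⟩ := ha
    have hb := mem_box6 (Finset.mem_filter.mp has).1
    obtain ⟨x₁, x₂, x₃, y₁, y₂, y₃⟩ := a
    simp only at hb
    simp only [Finset.mem_coe, Finset.mem_product, Finset.mem_Icc, Finset.mem_univ, and_true, CC, BB]
    refine ⟨⟨⟨by omega, by omega⟩, by push_cast; omega, by push_cast; omega⟩,
      by push_cast; omega, by push_cast; omega⟩
  · intro a ha b hb hab
    simp only [Finset.coe_filter, Set.mem_setOf_eq] at ha hb
    obtain ⟨has, hh0a⟩ := ha
    obtain ⟨hbs, hh0b⟩ := hb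
    have hua : uu a * vv a = 0 := by rw [key_id has, hh0a, zero_mul]
    have hub : uu b * vv b = 0 := by rw [key_id hbs, hh0b, zero_mul]
    have hla := (Finset.mem_filter.mp has).2.1
    have hlb := (Finset.mem_filter.mp hbs).2.1
    simp only [Prod.mk.injEq] at hab
    obtain ⟨⟨h3, hC⟩, hB, hD⟩ := hab
    rw [decide_eq_decide] at hD
    obtain ⟨x₁, x₂, x₃, y₁, y₂, y₃⟩ := a
    obtain ⟨x₁', x₂', x₃', y₁', y₂', y₃'⟩ := b
    simp only [uu, vv, BB, DD, CC, hh, lin] at *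
    rcases mul_eq_zero.mp hua with h | h <;> rcases mul_eq_zero.mp hub with h' | h' <;>
      simp only [Prod.mk.injEq] <;>
      refine ⟨by omega, by omega, by omega, by omega, by omega, by omega⟩

-- Part E1 : hh ≠ 0, uu*vv = 0
lemma cardE1 (N : ℕ) :
    ((sols N).filter (fun a => hh a ≠ 0 ∧ uu a * vv a = 0)).card
      ≤ (N * N) * ((2*N+1) * 2) := by
  have := Finset.card_le_card_of_injOn
    (f := fun a : T6 => ((a.2.2.1, a.2.2.2.2.2), (BB a, decide (DD a = BB a))))
    (s := (sols N).filter (fun a => hh a ≠ 0 ∧ uu a * vv a = 0))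
    (t := (Finset.Icc 1 N ×ˢ Finset.Icc 1 N) ×ˢ
      (Finset.Icc (-(N:ℤ)) N ×ˢ (Finset.univ : Finset Bool)))
    ?_ ?_
  · refine le_trans this ?_
    rw [Finset.card_product, Finset.card_product, Finset.card_product]
    refine Nat.mul_le_mul (Nat.mul_le_mul ?_ ?_) (Nat.mul_le_mul ?_ ?_) <;>
      simp only [Nat.card_Icc, Int.card_Icc, Finset.card_univ, Fintype.card_bool] <;> omega
  · intro a ha
    simp only [Finset.mem_coe, Finset.mem_filter] at ha
    obtain ⟨has, -⟩ := ha
    have hb := mem_box6 (Finset.mem_filter.mp has).1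
    obtain ⟨x₁, x₂, x₃, y₁, y₂, y₃⟩ := a
    simp only at hb
    simp only [Finset.mem_coe, Finset.mem_product, Finset.mem_Icc, Finset.mem_univ, and_true, BB]
    refine ⟨⟨⟨by omega, by omega⟩, by omega, by omega⟩, by push_cast; omega,
      by push_cast; omega⟩
  · intro a ha b hb hab
    simp only [Finset.coe_filter, Set.mem_setOf_eq] at ha hb
    obtain ⟨has, hha, hua⟩ := ha
    obtain ⟨hbs, hhb, hub⟩ := hb
    have hKa : KK a = 0 := by
      have := key_id has
      rw [hua] at this
      exact (mul_eq_zero.mp this.symm).resolve_left hha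
    have hKb : KK b = 0 := by
      have := key_id hbs
      rw [hub] at this
      exact (mul_eq_zero.mp this.symm).resolve_left hhb
    have hla := (Finset.mem_filter.mp has).2.1
    have hlb := (Finset.mem_filter.mp hbs).2.1
    simp only [Prod.mk.injEq] at hab
    obtain ⟨⟨h3, h6⟩, hB, hD⟩ := hab
    rw [decide_eq_decide] at hD
    obtain ⟨x₁, x₂, x₃, y₁, y₂, y₃⟩ := a
    obtain ⟨x₁', x₂', x₃', y₁', y₂', y₃'⟩ := b
    simp only [uu, vv, BB, DD, CC, hh, KK, lin] at *
    rcases mul_eq_zero.mp hua with h | h <;> rcases mul_eq_zero.mp hub with h' | h' <;>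
      simp only [Prod.mk.injEq] <;>
      refine ⟨by omega, by omega, by omega, by omega, by omega, by omega⟩

-- Part E2 : hh ≠ 0, uu*vv ≠ 0
lemma cardE2 (N : ℕ) :
    ((sols N).filter (fun a => hh a ≠ 0 ∧ uu a * vv a ≠ 0)).card
      ≤ (Tset (9*N)).card * ((4*N+1) * 8) := by
  have := Finset.card_le_card_of_injOn
    (f := fun a : T6 => (((hh a).natAbs, (KK a).natAbs, (uu a).natAbs, (vv a).natAbs),
      (CC a, (decide (0 < hh a), decide (0 < uu a), decide (0 < vv a)))))
    (s := (sols N).filter (fun a => hh a ≠ 0 ∧ uu a * vv a ≠ 0))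
    (t := Tset (9*N) ×ˢ
      (Finset.Icc (2:ℤ) (4*N) ×ˢ (Finset.univ : Finset (Bool × Bool × Bool))))
    ?_ ?_
  · refine le_trans this ?_
    rw [Finset.card_product, Finset.card_product]
    refine Nat.mul_le_mul le_rfl (Nat.mul_le_mul ?_ ?_) <;>
      simp only [Nat.card_Icc, Int.card_Icc, Finset.card_univ, Fintype.card_prod,
        Fintype.card_bool] <;> omega
  · intro a ha
    simp only [Finset.mem_coe, Finset.mem_filter] at ha
    obtain ⟨has, hha, hua⟩ := ha
    have hkey := key_id has
    have hb := mem_box6 (Finset.mem_filter.mp has).1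
    have hu : uu a ≠ 0 := fun h => hua (by rw [h, zero_mul])
    have hv : vv a ≠ 0 := fun h => hua (by rw [h, mul_zero])
    have hK : KK a ≠ 0 := by
      intro h
      rw [h, mul_zero] at hkey
      exact hua hkey
    have habs : (hh a).natAbs * (KK a).natAbs = (uu a).natAbs * (vv a).natAbs := by
      rw [← Int.natAbs_mul, ← Int.natAbs_mul, hkey]
    simp only [Finset.mem_coe, Finset.mem_product, Finset.mem_Icc, Finset.mem_univ, and_true, Tset,
      Finset.mem_filter]
    obtain ⟨x₁, x₂, x₃, y₁, y₂, y₃⟩ := a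
    simp only at hb
    simp only [uu, vv, BB, DD, CC, hh, KK] at hu hv hK hha habs ⊢
    exact ⟨⟨⟨⟨by omega, by omega⟩, ⟨by omega, by omega⟩, ⟨by omega, by omega⟩, by omega,
      by omega⟩, habs⟩, by push_cast; omega, by push_cast; omega⟩
  · intro a ha b hb hab
    simp only [Finset.coe_filter, Set.mem_setOf_eq] at ha hb
    obtain ⟨has, hha, hua⟩ := ha
    obtain ⟨hbs, hhb, hub⟩ := hb
    have hkeya := key_id has
    have hkeyb := key_id hbs
    have hva : vv a ≠ 0 := fun h => hua (by rw [h, mul_zero])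
    have hvb : vv b ≠ 0 := fun h => hub (by rw [h, mul_zero])
    have hua' : uu a ≠ 0 := fun h => hua (by rw [h, zero_mul])
    have hub' : uu b ≠ 0 := fun h => hub (by rw [h, zero_mul])
    simp only [Prod.mk.injEq] at hab
    obtain ⟨⟨hA1, hA2, hA3, hA4⟩, hC, hS1, hS2, hS3⟩ := hab
    rw [decide_eq_decide] at hS1 hS2 hS3
    have hhe : hh a = hh b := by omega
    have hue : uu a = uu b := by omega
    have hve : vv a = vv b := by omega
    have hKe : KK a = KK b := by
      have : hh a * KK a = hh a * KK b := by
        rw [← hkeya, hue, hve, hkeyb, ← hhe]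
      exact mul_left_cancel₀ hha this
    have hla := (Finset.mem_filter.mp has).2.1
    have hlb := (Finset.mem_filter.mp hbs).2.1
    obtain ⟨x₁, x₂, x₃, y₁, y₂, y₃⟩ := a
    obtain ⟨x₁', x₂', x₃', y₁', y₂', y₃'⟩ := b
    simp only [uu, vv, BB, DD, CC, hh, KK, lin] at hhe hue hve hKe hC hla hlb
    simp only [Prod.mk.injEq]
    refine ⟨by omega, by omega, by omega, by omega, by omega, by omega⟩

lemma sols_split (N : ℕ) :
    (sols N).card ≤ ((sols N).filter (fun a => hh a = 0)).card
      + ((sols N).filter (fun a => hh a ≠ 0 ∧ uu a * vv a = 0)).card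
      + ((sols N).filter (fun a => hh a ≠ 0 ∧ uu a * vv a ≠ 0)).card := by
  have h1 : sols N ⊆ ((sols N).filter (fun a => hh a = 0))
      ∪ ((sols N).filter (fun a => hh a ≠ 0 ∧ uu a * vv a = 0))
      ∪ ((sols N).filter (fun a => hh a ≠ 0 ∧ uu a * vv a ≠ 0)) := by
    intro a ha
    simp only [Finset.mem_union, Finset.mem_filter]
    by_cases h : hh a = 0
    · exact Or.inl (Or.inl ⟨ha, h⟩)
    · by_cases h' : uu a * vv a = 0
      · exact Or.inl (Or.inr ⟨ha, h, h'⟩)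
      · exact Or.inr ⟨ha, h, h'⟩
  calc (sols N).card ≤ _ := Finset.card_le_card h1
    _ ≤ _ := le_trans (Finset.card_union_le _ _)
        (Nat.add_le_add_right (Finset.card_union_le _ _) _)

lemma sols_card_real (N : ℕ) (hN : 1 ≤ N) :
    ((sols N).card : ℝ) ≤ 3282 * (N:ℝ)^3 * (1 + Real.log (9*(N:ℝ)))^2 := by
  have hn : (1:ℝ) ≤ (N:ℝ) := by exact_mod_cast hN
  set n := (N:ℝ) with hndef
  set L := 1 + Real.log (9*n) with hLdef
  have hL1 : (1:ℝ) ≤ L := by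
    have : (0:ℝ) ≤ Real.log (9*n) := Real.log_nonneg (by nlinarith)
    rw [hLdef]; linarith
  have hnat : (sols N).card ≤ (N * (4*N+1)) * ((2*N+1) * 2) + (N * N) * ((2*N+1) * 2)
      + (Tset (9*N)).card * ((4*N+1) * 8) :=
    le_trans (sols_split N)
      (Nat.add_le_add (Nat.add_le_add (cardE0 N) (cardE1 N)) (cardE2 N))
  have hTD : ((Tset (9*N)).card : ℝ) ≤ (9*n*L)^2 := by
    have h1 : ((Tset (9*N)).card : ℝ) ≤ ((Dset (9*N)).card : ℝ)^2 := by
      exact_mod_cast Tset_card_le (9*N)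
    have h2 : ((Dset (9*N)).card : ℝ) ≤ 9*n*L := by
      have := Dset_card_real (9*N) (by omega)
      calc ((Dset (9*N)).card : ℝ) ≤ ((9*N : ℕ):ℝ) * (1 + Real.log ((9*N : ℕ):ℝ)) := this
        _ = 9*n*L := by rw [hLdef]; push_cast; ring
    calc ((Tset (9*N)).card : ℝ) ≤ ((Dset (9*N)).card : ℝ)^2 := h1
      _ ≤ (9*n*L)^2 := by
          apply pow_le_pow_left₀ (by positivity) h2
  have hcast : ((sols N).card : ℝ) ≤ (n * (4*n+1)) * ((2*n+1) * 2) + (n * n) * ((2*n+1) * 2)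
      + ((Tset (9*N)).card : ℝ) * ((4*n+1) * 8) := by
    have := hnat
    have h := (Nat.cast_le (α := ℝ)).mpr this
    push_cast at h
    convert h using 2 <;> push_cast <;> ring
  have hfinal : (n * (4*n+1)) * ((2*n+1) * 2) + (n * n) * ((2*n+1) * 2)
      + ((Tset (9*N)).card : ℝ) * ((4*n+1) * 8) ≤ 3282 * n^3 * L^2 := by
    have h3 : ((Tset (9*N)).card : ℝ) * ((4*n+1) * 8) ≤ (9*n*L)^2 * ((4*n+1) * 8) :=
      mul_le_mul_of_nonneg_right hTD (by positivity)
    have hn2 : n^2 ≤ n^3 := by nlinarith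
    have hn1 : n ≤ n^3 := by nlinarith
    have hL2 : (1:ℝ) ≤ L^2 := by nlinarith
    have hc1 : n^3 ≤ n^3 * L^2 := by nlinarith
    have hc2 : n^2 * L^2 ≤ n^3 * L^2 := by nlinarith
    nlinarith [h3, hn2, hn1, hL2, hc1, hc2, sq_nonneg L, sq_nonneg n,
      mul_le_mul_of_nonneg_right hn2 (le_trans zero_le_one hL2)]
  linarith


lemma cont_bigE1 (α₂ α₃ : ℝ) (a : T6) : Continuous fun α₁ : ℝ => bigE α₁ α₂ α₃ a := by
  unfold bigE; fun_prop

lemma integral_bigE1 (α₂ α₃ : ℝ) (a : T6) :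
    (∫ α₁ in (0:ℝ)..1, bigE α₁ α₂ α₃ a)
      = (if lin a = 0 then 1 else 0) *
        Complex.exp (2 * Real.pi * Complex.I *
          ((α₂ : ℂ) * (qua a : ℂ) + (α₃ : ℂ) * (cub a : ℂ))) := by
  have h : ∀ α₁ : ℝ, bigE α₁ α₂ α₃ a
      = Complex.exp (2 * Real.pi * Complex.I *
          ((α₂ : ℂ) * (qua a : ℂ) + (α₃ : ℂ) * (cub a : ℂ))) *
        Complex.exp (2*Real.pi*Complex.I*(lin a : ℂ)*(α₁:ℂ)) := by
    intro α₁
    rw [bigE, ← Complex.exp_add]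
    congr 1
    ring
  simp only [h]
  rw [intervalIntegral.integral_const_mul, orth01]
  ring

-- the inner α₁ integral
lemma inner1 (α₂ α₃ : ℝ) (N : ℕ) :
    (∫ α₁ in (0:ℝ)..1,
      ‖∑ x ∈ Finset.Icc 1 N, ph α₁ α₂ α₃ x‖ ^ 6)
    = (∑ a ∈ box6 N, (if lin a = 0 then 1 else 0) *
        Complex.exp (2 * Real.pi * Complex.I *
          ((α₂ : ℂ) * (qua a : ℂ) + (α₃ : ℂ) * (cub a : ℂ)))).re := by
  have h1 : (∫ α₁ in (0:ℝ)..1,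
      ‖∑ x ∈ Finset.Icc 1 N, ph α₁ α₂ α₃ x‖ ^ 6)
      = ∫ α₁ in (0:ℝ)..1, (∑ a ∈ box6 N, bigE α₁ α₂ α₃ a).re := by
    refine intervalIntegral.integral_congr fun α₁ _ => expand_pow6 α₁ α₂ α₃ N
  rw [h1]
  have hint : ∀ a ∈ box6 N, IntervalIntegrable (fun α₁ => bigE α₁ α₂ α₃ a) volume 0 1 :=
    fun a _ => (cont_bigE1 α₂ α₃ a).intervalIntegrable _ _
  rw [integral_re01 (by
    exact (continuous_finset_sum (box6 N) fun a _ => cont_bigE1 α₂ α₃ a).intervalIntegrable _ _),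
    intervalIntegral.integral_finset_sum hint]
  congr 1
  exact Finset.sum_congr rfl fun a _ => integral_bigE1 α₂ α₃ a

lemma cont_bigE2 (α₃ : ℝ) (a : T6) : Continuous fun α₂ : ℝ =>
    (if lin a = 0 then (1:ℂ) else 0) *
      Complex.exp (2 * Real.pi * Complex.I *
        ((α₂ : ℂ) * (qua a : ℂ) + (α₃ : ℂ) * (cub a : ℂ))) := by
  fun_prop

lemma inner2 (α₃ : ℝ) (N : ℕ) :
    (∫ α₂ in (0:ℝ)..1, ∫ α₁ in (0:ℝ)..1,
      ‖∑ x ∈ Finset.Icc 1 N, ph α₁ α₂ α₃ x‖ ^ 6)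
    = (∑ a ∈ sols N,
        Complex.exp (2 * Real.pi * Complex.I * ((α₃ : ℂ) * (cub a : ℂ)))).re := by
  have h1 : (∫ α₂ in (0:ℝ)..1, ∫ α₁ in (0:ℝ)..1,
      ‖∑ x ∈ Finset.Icc 1 N, ph α₁ α₂ α₃ x‖ ^ 6)
      = ∫ α₂ in (0:ℝ)..1, (∑ a ∈ box6 N, (if lin a = 0 then 1 else 0) *
          Complex.exp (2 * Real.pi * Complex.I *
            ((α₂ : ℂ) * (qua a : ℂ) + (α₃ : ℂ) * (cub a : ℂ)))).re :=
    intervalIntegral.integral_congr fun α₂ _ => inner1 α₂ α₃ N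
  rw [h1]
  rw [integral_re01 (by
    exact (continuous_finset_sum (box6 N) fun a _ => cont_bigE2 α₃ a).intervalIntegrable _ _),
    intervalIntegral.integral_finset_sum
      (fun a (_ : a ∈ box6 N) => (cont_bigE2 α₃ a).intervalIntegrable _ _)]
  congr 1
  have key : ∀ a ∈ box6 N,
      (∫ α₂ in (0:ℝ)..1, (if lin a = 0 then (1:ℂ) else 0) *
        Complex.exp (2 * Real.pi * Complex.I *
          ((α₂ : ℂ) * (qua a : ℂ) + (α₃ : ℂ) * (cub a : ℂ))))
      = (if lin a = 0 ∧ qua a = 0 then 1 else 0) *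
          Complex.exp (2 * Real.pi * Complex.I * ((α₃ : ℂ) * (cub a : ℂ))) := by
    intro a _
    rw [intervalIntegral.integral_const_mul]
    have h : ∀ α₂ : ℝ, Complex.exp (2 * Real.pi * Complex.I *
          ((α₂ : ℂ) * (qua a : ℂ) + (α₃ : ℂ) * (cub a : ℂ)))
        = Complex.exp (2 * Real.pi * Complex.I * ((α₃ : ℂ) * (cub a : ℂ))) *
          Complex.exp (2*Real.pi*Complex.I*(qua a : ℂ)*(α₂:ℂ)) := by
      intro α₂; rw [← Complex.exp_add]; congr 1; ring
    simp only [h]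
    rw [intervalIntegral.integral_const_mul, orth01]
    rcases eq_or_ne (lin a) 0 with h1 | h1 <;> rcases eq_or_ne (qua a) 0 with h2 | h2 <;>
      simp [h1, h2]
  rw [Finset.sum_congr rfl key, sols, Finset.sum_filter]
  refine Finset.sum_congr rfl fun a _ => ?_
  rcases em (lin a = 0 ∧ qua a = 0) with h | h <;> simp [h]

lemma re_sum_le (α₃ : ℝ) (N : ℕ) :
    |(∑ a ∈ sols N,
        Complex.exp (2 * Real.pi * Complex.I * ((α₃ : ℂ) * (cub a : ℂ)))).re|
      ≤ (sols N).card := by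
  refine le_trans (Complex.abs_re_le_norm _) ?_
  refine le_trans (norm_sum_le _ _) ?_
  have : ∀ a ∈ sols N,
      ‖Complex.exp (2 * Real.pi * Complex.I * ((α₃ : ℂ) * (cub a : ℂ)))‖ = 1 := by
    intro a _
    rw [Complex.norm_exp]
    have h0 : (2 * (Real.pi:ℂ) * Complex.I * ((α₃:ℂ) * ((cub a : ℤ):ℂ))).re = 0 := by
      simp [Complex.mul_re, Complex.mul_im]
    rw [h0, Real.exp_zero]
  rw [Finset.sum_congr rfl this]
  simp


lemma meas_major (X Q : ℝ) (hX : 2 ≤ X) (hQ1 : 1 ≤ Q) (hQX : Q ≤ X) :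
    (volume {α : ℝ | α ∈ Set.Ico (0:ℝ) 1 ∧
        ∃ (q : ℕ) (a : ℕ), 1 ≤ q ∧ (q : ℝ) ≤ Q ∧ a ≤ q ∧ Nat.gcd a q = 1 ∧
          |(q : ℝ) * α - a| ≤ Q / X ^ 3}).toReal ≤ 4 * Q ^ 2 / X ^ 3 := by
  set δ := Q / X ^ 3 with hδ
  have hX0 : (0:ℝ) < X := by linarith
  have hδ0 : 0 ≤ δ := by positivity
  have hsub : {α : ℝ | α ∈ Set.Ico (0:ℝ) 1 ∧
      ∃ (q : ℕ) (a : ℕ), 1 ≤ q ∧ (q : ℝ) ≤ Q ∧ a ≤ q ∧ Nat.gcd a q = 1 ∧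
        |(q : ℝ) * α - a| ≤ δ}
      ⊆ ⋃ q ∈ Finset.Icc 1 ⌊Q⌋₊, ⋃ a ∈ Finset.range (q+1),
          Set.Icc (((a:ℝ) - δ)/q) (((a:ℝ) + δ)/q) := by
    rintro α ⟨-, q, a, hq1, hqQ, haq, -, habs⟩
    have hq0 : (0:ℝ) < q := by exact_mod_cast hq1
    have h1 : ((a:ℝ) - δ)/q ≤ α := by
      rw [div_le_iff₀ hq0]
      have := abs_le.mp habs
      nlinarith [this.1, this.2]
    have h2 : α ≤ ((a:ℝ) + δ)/q := by
      rw [le_div_iff₀ hq0]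
      have := abs_le.mp habs
      nlinarith [this.1, this.2]
    refine Set.mem_iUnion.mpr ⟨q, Set.mem_iUnion.mpr ⟨?_, Set.mem_iUnion.mpr ⟨a,
      Set.mem_iUnion.mpr ⟨?_, ⟨h1, h2⟩⟩⟩⟩⟩
    · simp only [Finset.mem_Icc]
      exact ⟨hq1, Nat.le_floor hqQ⟩
    · simp only [Finset.mem_range]
      omega
  calc (volume {α : ℝ | α ∈ Set.Ico (0:ℝ) 1 ∧
      ∃ (q : ℕ) (a : ℕ), 1 ≤ q ∧ (q : ℝ) ≤ Q ∧ a ≤ q ∧ Nat.gcd a q = 1 ∧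
        |(q : ℝ) * α - a| ≤ δ}).toReal
      ≤ (ENNReal.ofReal (4 * Q * δ)).toReal := by
        apply ENNReal.toReal_mono ENNReal.ofReal_ne_top
        refine le_trans (measure_mono hsub) ?_
        refine le_trans (measure_biUnion_finset_le _ _) ?_
        have hin : ∀ q ∈ Finset.Icc 1 ⌊Q⌋₊,
            (volume (⋃ a ∈ Finset.range (q+1),
              Set.Icc (((a:ℝ) - δ)/q) (((a:ℝ) + δ)/q))) ≤ ENNReal.ofReal (4 * δ) := by
          intro q hq
          simp only [Finset.mem_Icc] at hq
          have hq0 : (0:ℝ) < q := by exact_mod_cast hq.1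
          refine le_trans (measure_biUnion_finset_le _ _) ?_
          have heach : ∀ a ∈ Finset.range (q+1),
              volume (Set.Icc (((a:ℝ) - δ)/q) (((a:ℝ) + δ)/q))
                = ENNReal.ofReal (2 * δ / q) := by
            intro a _
            rw [Real.volume_Icc]
            congr 1
            field_simp
            ring
          rw [Finset.sum_congr rfl heach, Finset.sum_const, Finset.card_range, nsmul_eq_mul,
            ← ENNReal.ofReal_natCast, ← ENNReal.ofReal_mul (by positivity)]
          apply ENNReal.ofReal_le_ofReal
          have h2 : ((q:ℝ) + 1) ≤ 2 * q := by
            have : (1:ℝ) ≤ q := by exact_mod_cast hq.1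
            linarith
          have : ((q+1 : ℕ):ℝ) * (2 * δ / q) = ((q:ℝ)+1) * (2 * δ / q) := by push_cast; ring
          rw [this]
          calc ((q:ℝ)+1) * (2 * δ / q) ≤ 2 * (q:ℝ) * (2 * δ / q) := by
                apply mul_le_mul_of_nonneg_right h2
                positivity
            _ = 4 * δ := by field_simp; ring
        refine le_trans (Finset.sum_le_sum hin) ?_
        rw [Finset.sum_const, Nat.card_Icc, nsmul_eq_mul, ← ENNReal.ofReal_natCast,
          ← ENNReal.ofReal_mul (by positivity)]
        apply ENNReal.ofReal_le_ofReal
        have h3 : ((⌊Q⌋₊ + 1 - 1 : ℕ) : ℝ) ≤ Q :=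
          le_trans (by push_cast [Nat.add_sub_cancel]; exact le_rfl) (Nat.floor_le (by linarith))
        nlinarith
    _ ≤ 4 * Q ^ 2 / X ^ 3 := by
        rw [ENNReal.toReal_ofReal (by positivity), hδ]
        rw [mul_div_assoc]
        ring_nf
        exact le_rfl

lemma log9_le : Real.log 9 ≤ 3 := by
  rw [Real.log_le_iff_le_exp (by norm_num)]
  have h1 : (2.7182818283 : ℝ) < Real.exp 1 := Real.exp_one_gt_d9
  have h3 : Real.exp 1 ^ (3:ℕ) = Real.exp 3 := by
    rw [← Real.exp_nat_mul]; norm_num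
  calc (9:ℝ) ≤ (2.7182818283 : ℝ)^(3:ℕ) := by norm_num
    _ ≤ Real.exp 1 ^ (3:ℕ) := pow_le_pow_left₀ (by norm_num) h1.le 3
    _ = Real.exp 3 := h3

lemma loglem {ε X : ℝ} (hε : 0 < ε) (hX : 2 ≤ X) :
    (1 + Real.log (9*X))^2 ≤ (4 + 2/ε)^2 * X ^ ε := by
  have hX0 : (0:ℝ) < X := by linarith
  have hr0 : (0:ℝ) < X ^ (ε/2) := Real.rpow_pos_of_pos hX0 _
  have hr1 : (1:ℝ) ≤ X ^ (ε/2) := by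
    apply Real.one_le_rpow (by linarith)
    positivity
  have hlog : Real.log (9*X) = Real.log 9 + Real.log X :=
    Real.log_mul (by norm_num) (by linarith)
  have hlogX : Real.log X ≤ (2/ε) * X ^ (ε/2) := by
    have := Real.log_le_rpow_div hX0.le (half_pos hε)
    calc Real.log X ≤ X ^ (ε/2) / (ε/2) := this
      _ = (2/ε) * X ^ (ε/2) := by field_simp
  have hL : 1 + Real.log (9*X) ≤ (4 + 2/ε) * X ^ (ε/2) := by
    rw [hlog]
    have h9 := log9_le
    have h4 : (4:ℝ) ≤ 4 * X ^ (ε/2) := by nlinarith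
    calc 1 + (Real.log 9 + Real.log X) ≤ 4 + (2/ε) * X ^ (ε/2) := by linarith
      _ ≤ 4 * X ^ (ε/2) + (2/ε) * X ^ (ε/2) := by linarith
      _ = (4 + 2/ε) * X ^ (ε/2) := by ring
  have hL0 : 0 ≤ 1 + Real.log (9*X) := by
    have : (1:ℝ) ≤ 9*X := by linarith
    have := Real.log_nonneg this
    linarith
  have hsq : ((4 + 2/ε) * X ^ (ε/2))^2 = (4 + 2/ε)^2 * X ^ ε := by
    rw [mul_pow, sq (X ^ (ε/2)), ← Real.rpow_add hX0]
    norm_num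
  calc (1 + Real.log (9*X))^2 ≤ ((4 + 2/ε) * X ^ (ε/2))^2 := by
        apply pow_le_pow_left₀ hL0 hL
    _ = (4 + 2/ε)^2 * X ^ ε := hsq


end

end MA6

open MeasureTheory MA6 in
theorem major_arc_sixth_moment :
    ∀ ε : ℝ, 0 < ε → ∃ C : ℝ, 0 < C ∧
      ∀ (X Q : ℝ), 2 ≤ X → 1 ≤ Q → Q ≤ X →
        (∫ α₃ in {α : ℝ | α ∈ Set.Ico (0:ℝ) 1 ∧
            ∃ (q : ℕ) (a : ℕ), 1 ≤ q ∧ (q : ℝ) ≤ Q ∧ a ≤ q ∧ Nat.gcd a q = 1 ∧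
              |(q : ℝ) * α - a| ≤ Q / X ^ 3},
          ∫ α₂ in (0:ℝ)..1, ∫ α₁ in (0:ℝ)..1,
            ‖(∑ x ∈ Finset.Icc 1 ⌊X⌋₊,
                Complex.exp (2 * Real.pi * Complex.I *
                  ((α₁ : ℂ) * (x : ℂ) + (α₂ : ℂ) * (x : ℂ) ^ 2 +
                    (α₃ : ℂ) * (x : ℂ) ^ 3)))‖ ^ 6)
          ≤ C * Q ^ 2 * X ^ ε := by
  intro ε hε
  refine ⟨13128 * (4 + 2/ε)^2, by positivity, ?_⟩
  intro X Q hX hQ1 hQX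
  set S := {α : ℝ | α ∈ Set.Ico (0:ℝ) 1 ∧
      ∃ (q : ℕ) (a : ℕ), 1 ≤ q ∧ (q : ℝ) ≤ Q ∧ a ≤ q ∧ Nat.gcd a q = 1 ∧
        |(q : ℝ) * α - a| ≤ Q / X ^ 3} with hS
  set N := ⌊X⌋₊ with hN
  have hX0 : (0:ℝ) < X := by linarith
  have hN1 : 1 ≤ N := by
    rw [hN]
    have : (1:ℕ) ≤ ⌊X⌋₊ := Nat.le_floor (by exact_mod_cast by linarith : ((1:ℕ):ℝ) ≤ X)
    exact this
  have hNX : (N:ℝ) ≤ X := Nat.floor_le hX0.le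
  -- rewrite the integrand
  have key : (∫ α₃ in S,
      ∫ α₂ in (0:ℝ)..1, ∫ α₁ in (0:ℝ)..1,
        ‖(∑ x ∈ Finset.Icc 1 ⌊X⌋₊,
            Complex.exp (2 * Real.pi * Complex.I *
              ((α₁ : ℂ) * (x : ℂ) + (α₂ : ℂ) * (x : ℂ) ^ 2 +
                (α₃ : ℂ) * (x : ℂ) ^ 3)))‖ ^ 6)
      = ∫ α₃ in S, (∑ a ∈ sols N,
          Complex.exp (2 * Real.pi * Complex.I * ((α₃ : ℂ) * (cub a : ℂ)))).re := by
    refine integral_congr_ae (Filter.Eventually.of_forall fun α₃ => ?_)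
    have := inner2 α₃ N
    simp only [ph] at this
    exact this
  rw [key]
  have hcont : Continuous (fun α₃ : ℝ => (∑ a ∈ sols N,
      Complex.exp (2 * Real.pi * Complex.I * ((α₃ : ℂ) * (cub a : ℂ)))).re) := by
    fun_prop
  have hfin : volume S < ⊤ := by
    have h1 : volume S ≤ volume (Set.Ico (0:ℝ) 1) := measure_mono fun α hα => hα.1
    refine lt_of_le_of_lt h1 ?_
    rw [Real.volume_Ico]
    exact ENNReal.ofReal_lt_top
  have hbound : ∀ α₃ ∈ S, ‖(∑ a ∈ sols N,
      Complex.exp (2 * Real.pi * Complex.I * ((α₃ : ℂ) * (cub a : ℂ)))).re‖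
        ≤ ((sols N).card : ℝ) := fun α₃ _ => by
    rw [Real.norm_eq_abs]; exact re_sum_le α₃ N
  have hnorm := norm_setIntegral_le_of_norm_le_const hfin hbound
  have hint_le : (∫ α₃ in S, (∑ a ∈ sols N,
      Complex.exp (2 * Real.pi * Complex.I * ((α₃ : ℂ) * (cub a : ℂ)))).re)
      ≤ ((sols N).card : ℝ) * (volume S).toReal :=
    le_trans (le_abs_self _) (by rw [← Real.norm_eq_abs]; exact hnorm)
  have hcard : ((sols N).card : ℝ) ≤ 3282 * X^3 * (1 + Real.log (9*X))^2 := by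
    refine le_trans (sols_card_real N hN1) ?_
    have h1 : ((N:ℝ))^3 ≤ X^3 := by
      apply pow_le_pow_left₀ (by positivity) hNX
    have h2 : (1 + Real.log (9*(N:ℝ)))^2 ≤ (1 + Real.log (9*X))^2 := by
      have hl : Real.log (9*(N:ℝ)) ≤ Real.log (9*X) := by
        apply Real.log_le_log (by positivity)
        have : (1:ℝ) ≤ (N:ℝ) := by exact_mod_cast hN1
        nlinarith
      have h0 : 0 ≤ 1 + Real.log (9*(N:ℝ)) := by
        have : (1:ℝ) ≤ 9*(N:ℝ) := by
          have : (1:ℝ) ≤ (N:ℝ) := by exact_mod_cast hN1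
          nlinarith
        have := Real.log_nonneg this
        linarith
      apply pow_le_pow_left₀ h0 (by linarith)
    have hLX0 : (0:ℝ) ≤ (1 + Real.log (9*(N:ℝ)))^2 := by positivity
    calc 3282 * (N:ℝ)^3 * (1 + Real.log (9*(N:ℝ)))^2
        ≤ 3282 * X^3 * (1 + Real.log (9*(N:ℝ)))^2 := by
          apply mul_le_mul_of_nonneg_right _ hLX0
          nlinarith
      _ ≤ 3282 * X^3 * (1 + Real.log (9*X))^2 := by
          apply mul_le_mul_of_nonneg_left h2 (by positivity)
  have hmeas := meas_major X Q hX hQ1 hQX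
  have hL2 : (0:ℝ) ≤ (1 + Real.log (9*X))^2 := by positivity
  calc (∫ α₃ in S, (∑ a ∈ sols N,
      Complex.exp (2 * Real.pi * Complex.I * ((α₃ : ℂ) * (cub a : ℂ)))).re)
      ≤ ((sols N).card : ℝ) * (volume S).toReal := hint_le
    _ ≤ (3282 * X^3 * (1 + Real.log (9*X))^2) * (4 * Q^2 / X^3) := by
        apply mul_le_mul hcard ?_ ENNReal.toReal_nonneg (by positivity)
        rw [hS]
        exact hmeas
    _ = 13128 * Q^2 * (1 + Real.log (9*X))^2 := by
        field_simp
        ring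
    _ ≤ 13128 * Q^2 * ((4 + 2/ε)^2 * X ^ ε) := by
        apply mul_le_mul_of_nonneg_left (loglem hε hX) (by positivity)
    _ = 13128 * (4 + 2/ε)^2 * Q ^ 2 * X ^ ε := by ring
end

section
/- Let h₂ be a nonzero integer and X ≥ 1. Then the number of integral solutions of the system |∑_{i=1}^{5}(x_i³ - y_i³)| < 3|h₂|X, ∑_{i=1}^{5}(x_i² - y_i²) = 0, ∑_{i=1}^{5}(x_i - y_i) = 0, with 1 ≤ x_i, y_i ≤ 2X (1 ≤ i ≤ 5), is ≪_ε |h₂| X^{5+ε}, assuming the tenth-moment small-cap bound ∫_{-1/X}^{1/X} ∫_0^1 ∫_0^1 |f(α; 2X)|^{10} dα ≪_ε X^{4+ε}. -/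
open MeasureTheory
open scoped Classical

open intervalIntegral Real Finset


noncomputable def ee (r : ℝ) : ℂ := Complex.exp (2 * Real.pi * Complex.I * r)

lemma ee_add (r s : ℝ) : ee (r + s) = ee r * ee s := by
  rw [ee, ee, ee, ← Complex.exp_add]; congr 1; push_cast; ring

lemma conj_ee (r : ℝ) : (starRingEnd ℂ) (ee r) = ee (-r) := by
  rw [ee, ee, ← Complex.exp_conj]; congr 1
  simp only [map_mul, Complex.conj_I, Complex.conj_ofReal, map_ofNat]; push_cast; ring

lemma ee_cont : Continuous ee := by
  unfold ee; fun_prop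

lemma abs_ee (r : ℝ) : ‖ee r‖ = 1 := by
  rw [ee]
  have : (2 * Real.pi * Complex.I * r : ℂ) = ((2*Real.pi*r : ℝ) : ℂ) * Complex.I := by push_cast; ring
  rw [this, Complex.norm_exp_ofReal_mul_I]

lemma abs_pow_ten (z : ℂ) : ((‖z‖ ^ 10 : ℝ) : ℂ) = z ^ 5 * ((starRingEnd ℂ) z) ^ 5 := by
  rw [← mul_pow, Complex.mul_conj, Complex.normSq_eq_norm_sq]
  push_cast; ring

lemma pow_five (z : ℂ) : z ^ 5 = ∏ _i : Fin 5, z := by simp [Finset.prod_const]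



lemma ee_sum {ι : Type*} (s : Finset ι) (t : ι → ℝ) :
    ee (∑ i ∈ s, t i) = ∏ i ∈ s, ee (t i) := by
  rw [ee, Complex.ofReal_sum, Finset.mul_sum, Complex.exp_sum]; rfl

def boxS (N : ℕ) : Finset ((Fin 5 → ℕ) × (Fin 5 → ℕ)) :=
  (Fintype.piFinset fun _ : Fin 5 => Finset.Icc 1 N) ×ˢ
    (Fintype.piFinset fun _ : Fin 5 => Finset.Icc 1 N)

def LL (p : (Fin 5 → ℕ) × (Fin 5 → ℕ)) : ℤ := ∑ i, ((p.1 i : ℤ) - (p.2 i : ℤ))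
def QQ (p : (Fin 5 → ℕ) × (Fin 5 → ℕ)) : ℤ := ∑ i, ((p.1 i : ℤ) ^ 2 - (p.2 i : ℤ) ^ 2)
def CC (p : (Fin 5 → ℕ) × (Fin 5 → ℕ)) : ℤ := ∑ i, ((p.1 i : ℤ) ^ 3 - (p.2 i : ℤ) ^ 3)

lemma step1 (N : ℕ) (α₁ α₂ γ : ℝ) :
    ((‖∑ x ∈ Finset.Icc 1 N,
        Complex.exp (2 * Real.pi * Complex.I *
          ((α₁ : ℂ) * (x : ℂ) + (α₂ : ℂ) * (x : ℂ) ^ 2 + (γ : ℂ) * (x : ℂ) ^ 3))‖ ^ 10 : ℝ) : ℂ)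
      = ∑ p ∈ boxS N, ee (α₁ * (LL p : ℝ) + (α₂ * (QQ p : ℝ) + γ * (CC p : ℝ))) := by
  set φ : ℕ → ℝ := fun x => α₁ * x + α₂ * (x:ℝ)^2 + γ * (x:ℝ)^3 with hφ
  have hre : (∑ x ∈ Finset.Icc 1 N,
        Complex.exp (2 * Real.pi * Complex.I *
          ((α₁ : ℂ) * (x : ℂ) + (α₂ : ℂ) * (x : ℂ) ^ 2 + (γ : ℂ) * (x : ℂ) ^ 3)))
      = ∑ x ∈ Finset.Icc 1 N, ee (φ x) := by
    refine Finset.sum_congr rfl fun x _ => ?_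
    rw [ee]; congr 1; simp only [hφ]; push_cast; ring
  rw [hre, abs_pow_ten]
  have hpow : (∑ x ∈ Finset.Icc 1 N, ee (φ x)) ^ 5
      = ∑ x ∈ Fintype.piFinset (fun _ : Fin 5 => Finset.Icc 1 N), ee (∑ i, φ (x i)) := by
    rw [pow_five (∑ x ∈ Finset.Icc 1 N, ee (φ x)), Finset.prod_univ_sum]
    exact Finset.sum_congr rfl fun x _ => (ee_sum _ _).symm
  have hconj : ((starRingEnd ℂ) (∑ x ∈ Finset.Icc 1 N, ee (φ x))) ^ 5
      = ∑ y ∈ Fintype.piFinset (fun _ : Fin 5 => Finset.Icc 1 N), ee (-∑ i, φ (y i)) := by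
    rw [map_sum]
    rw [Finset.sum_congr rfl (fun x (_ : x ∈ Finset.Icc 1 N) => conj_ee (φ x))]
    rw [pow_five (∑ x ∈ Finset.Icc 1 N, ee (-φ x)), Finset.prod_univ_sum]
    refine Finset.sum_congr rfl fun y _ => ?_
    rw [← ee_sum]
    congr 1
    rw [← Finset.sum_neg_distrib]
  rw [hpow, hconj, Finset.sum_mul_sum, boxS, Finset.sum_product]
  refine Finset.sum_congr rfl fun x hx => Finset.sum_congr rfl fun y hy => ?_
  rw [← ee_add]
  congr 1
  have hL : ((LL (x, y) : ℤ) : ℝ) = ∑ i, ((x i : ℝ) - (y i : ℝ)) := by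
    rw [LL]; push_cast; rfl
  have hQ : ((QQ (x, y) : ℤ) : ℝ) = ∑ i, ((x i : ℝ)^2 - (y i : ℝ)^2) := by
    rw [QQ]; push_cast; rfl
  have hC : ((CC (x, y) : ℤ) : ℝ) = ∑ i, ((x i : ℝ)^3 - (y i : ℝ)^3) := by
    rw [CC]; push_cast; rfl
  rw [hL, hQ, hC, hφ]
  simp only [Fin.sum_univ_five]
  push_cast
  ring

lemma orth (k : ℤ) : ∫ α in (0:ℝ)..1, Complex.exp (2 * Real.pi * Complex.I * k * α) =
    if k = 0 then 1 else 0 := by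
  rcases eq_or_ne k 0 with h | h
  · simp [h]
  · rw [if_neg h]
    have hc : (2 * Real.pi * Complex.I * k : ℂ) ≠ 0 := by
      simp [Real.pi_ne_zero, Complex.I_ne_zero, h]
    rw [integral_exp_mul_complex hc]
    have : Complex.exp (2 * Real.pi * Complex.I * k * 1) = 1 := by
      rw [mul_one]
      have := Complex.exp_int_mul_two_pi_mul_I k
      rw [← this]; ring_nf
    rw [mul_one] at this; simp [this]

lemma key_integral (k : ℤ) (B : ℝ) :
    (∫ α in (0:ℝ)..1, ee (α * (k : ℝ) + B)) = if k = 0 then ee B else 0 := by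
  have h1 : (fun α : ℝ => ee (α * (k : ℝ) + B)) =
      fun α : ℝ => Complex.exp (2 * Real.pi * Complex.I * k * α) * ee B := by
    funext α
    rw [ee_add, ee]
    congr 2
    push_cast; ring
  rw [h1, intervalIntegral.integral_mul_const, orth]
  split <;> simp

lemma cont_ee_lin (c d : ℝ) : Continuous fun α : ℝ => ee (α * c + d) :=
  ee_cont.comp (by continuity)

lemma step2 (N : ℕ) (γ α₂ : ℝ) :
    (∫ α₁ in (0:ℝ)..1, ∑ p ∈ boxS N,
        ee (α₁ * (LL p : ℝ) + (α₂ * (QQ p : ℝ) + γ * (CC p : ℝ))))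
      = ∑ p ∈ (boxS N).filter (fun p => LL p = 0),
          ee (α₂ * (QQ p : ℝ) + γ * (CC p : ℝ)) := by
  rw [intervalIntegral.integral_finset_sum
    (fun p _ => (cont_ee_lin _ _).intervalIntegrable 0 1)]
  rw [Finset.sum_filter]
  exact Finset.sum_congr rfl fun p _ => key_integral (LL p) _

lemma step3 (N : ℕ) (γ : ℝ) :
    (∫ α₂ in (0:ℝ)..1, ∑ p ∈ (boxS N).filter (fun p => LL p = 0),
        ee (α₂ * (QQ p : ℝ) + γ * (CC p : ℝ)))
      = ∑ p ∈ (boxS N).filter (fun p => LL p = 0 ∧ QQ p = 0),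
          ee (γ * (CC p : ℝ)) := by
  rw [intervalIntegral.integral_finset_sum
    (fun p _ => (cont_ee_lin _ _).intervalIntegrable 0 1)]
  rw [Finset.sum_congr rfl (fun p _ => key_integral (QQ p) (γ * (CC p : ℝ)))]
  rw [← Finset.sum_filter, Finset.filter_filter]

noncomputable def phi (N : ℕ) (γ : ℝ) : ℝ :=
  ∫ α₂ in (0:ℝ)..1, ∫ α₁ in (0:ℝ)..1,
    ‖∑ x ∈ Finset.Icc 1 N,
      Complex.exp (2 * Real.pi * Complex.I *
        ((α₁ : ℂ) * (x : ℂ) + (α₂ : ℂ) * (x : ℂ) ^ 2 + (γ : ℂ) * (x : ℂ) ^ 3))‖ ^ 10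

def TT (N : ℕ) : Finset ((Fin 5 → ℕ) × (Fin 5 → ℕ)) :=
  (boxS N).filter (fun p => LL p = 0 ∧ QQ p = 0)

lemma my_ofReal (f : ℝ → ℝ) (a b : ℝ) :
    (∫ x in a..b, ((f x : ℝ) : ℂ)) = ((∫ x in a..b, f x : ℝ) : ℂ) :=
  RCLike.intervalIntegral_ofReal

lemma expand (N : ℕ) (γ : ℝ) :
    ((phi N γ : ℝ) : ℂ) = ∑ p ∈ TT N, ee (γ * (CC p : ℝ)) := by
  have h2 : ∀ α₂ : ℝ, ((∫ α₁ in (0:ℝ)..1,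
      ‖∑ x ∈ Finset.Icc 1 N,
        Complex.exp (2 * Real.pi * Complex.I *
          ((α₁ : ℂ) * (x : ℂ) + (α₂ : ℂ) * (x : ℂ) ^ 2 + (γ : ℂ) * (x : ℂ) ^ 3))‖ ^ 10 : ℝ) : ℂ)
      = ∑ p ∈ (boxS N).filter (fun p => LL p = 0),
          ee (α₂ * (QQ p : ℝ) + γ * (CC p : ℝ)) := by
    intro α₂
    rw [← my_ofReal, ← step2 N γ α₂]
    exact intervalIntegral.integral_congr fun α₁ _ => step1 N α₁ α₂ γ
  rw [phi, ← my_ofReal,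
    intervalIntegral.integral_congr (fun α₂ _ => h2 α₂), step3, TT]

lemma ee_re (r : ℝ) : (ee r).re = Real.cos (2 * Real.pi * r) := by
  rw [ee]
  have : (2 * Real.pi * Complex.I * r : ℂ) = ((2 * Real.pi * r : ℝ) : ℂ) * Complex.I := by
    push_cast; ring
  rw [this, Complex.exp_ofReal_mul_I_re]

lemma phi_cos (N : ℕ) (γ : ℝ) :
    phi N γ = ∑ p ∈ TT N, Real.cos (2 * Real.pi * (γ * (CC p : ℝ))) := by
  have := congrArg Complex.re (expand N γ)
  simpa [Complex.re_sum, ee_re] using this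

lemma phi_nonneg (N : ℕ) (γ : ℝ) : 0 ≤ phi N γ := by
  apply intervalIntegral.integral_nonneg zero_le_one
  intro α₂ _
  apply intervalIntegral.integral_nonneg zero_le_one
  intro α₁ _
  positivity


lemma gval (b c : ℝ) (hc : c ≠ 0) :
    ∫ β in (-b:ℝ)..b, Complex.exp (2 * Real.pi * Complex.I * c * β)
      = ((Real.sin (2 * Real.pi * b * c) / (Real.pi * c) : ℝ) : ℂ) := by
  have hk : (2 * Real.pi * Complex.I * c : ℂ) ≠ 0 := by
    simp [Real.pi_ne_zero, Complex.I_ne_zero, hc]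
  rw [integral_exp_mul_complex hk]
  have h1 : (2 * Real.pi * Complex.I * c : ℂ) * b = ((2 * Real.pi * b * c : ℝ) : ℂ) * Complex.I := by
    push_cast; ring
  have h2 : (2 * Real.pi * Complex.I * c : ℂ) * ((-b : ℝ) : ℂ) = ((-(2 * Real.pi * b * c) : ℝ) : ℂ) * Complex.I := by
    push_cast; ring
  rw [h1, h2, Complex.exp_mul_I, Complex.exp_mul_I]
  rw [Complex.ofReal_neg, Complex.cos_neg, Complex.sin_neg]
  rw [← Complex.ofReal_sin, ← Complex.ofReal_cos]
  have hπ : (Real.pi : ℂ) ≠ 0 := by exact_mod_cast Real.pi_ne_zero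
  have hcc : (c : ℂ) ≠ 0 := by exact_mod_cast hc
  push_cast
  field_simp
  ring_nf

noncomputable def ww (b c : ℝ) : ℝ :=
  if c = 0 then 2 * b else Real.sin (2 * Real.pi * b * c) / (Real.pi * c)

lemma int_ee (b c : ℝ) : (∫ β in (-b:ℝ)..b, ee (c * β)) = ((ww b c : ℝ) : ℂ) := by
  rcases eq_or_ne c 0 with h | h
  · simp [h, ww, ee]
    norm_num
    push_cast; ring
  · have : (fun β : ℝ => ee (c * β)) =
        fun β : ℝ => Complex.exp (2 * Real.pi * Complex.I * c * β) := by
      funext β; rw [ee]; congr 1; push_cast; ring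
    rw [this, gval b c h, ww, if_neg h]

lemma ww_neg (b c : ℝ) : ww b (-c) = ww b c := by
  rcases eq_or_ne c 0 with h | h
  · simp [h]
  · rw [ww, ww, if_neg h, if_neg (neg_ne_zero.mpr h)]
    rw [show 2 * Real.pi * b * -c = -(2 * Real.pi * b * c) by ring, Real.sin_neg]
    field_simp

lemma ww_sq_lower (X c : ℝ) (hX : 1 ≤ X) (hc : |c| ≤ X / 2) :
    4 / (Real.pi ^ 2 * X ^ 2) ≤ (ww (1 / (2 * X)) c) ^ 2 := by
  have hX0 : (0:ℝ) < X := lt_of_lt_of_le one_pos hX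
  have hπ := Real.pi_pos
  rcases eq_or_ne c 0 with h | h
  · rw [h, ww, if_pos rfl]
    have h1 : (2 * (1 / (2 * X))) ^ 2 = 1 / X ^ 2 := by field_simp
    rw [h1]
    rw [div_le_div_iff₀ (by positivity) (by positivity)]
    nlinarith [Real.pi_gt_three, sq_nonneg (Real.pi - 3), mul_pos hX0 hX0, sq_nonneg X]
  · rw [ww, if_neg h]
    have harg : 2 * Real.pi * (1 / (2 * X)) * c = Real.pi * c / X := by field_simp
    rw [harg, div_pow]
    have hs : (Real.sin (Real.pi * c / X)) ^ 2 = (Real.sin (Real.pi * |c| / X)) ^ 2 := by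
      rcases abs_cases c with ⟨h1, _⟩ | ⟨h1, _⟩
      · rw [h1]
      · rw [h1]
        rw [show Real.pi * -c / X = -(Real.pi * c / X) by ring, Real.sin_neg]
        ring
    have hjordan : 2 * |c| / X ≤ Real.sin (Real.pi * |c| / X) := by
      have h0 : 0 ≤ Real.pi * |c| / X := by positivity
      have h2 : Real.pi * |c| / X ≤ Real.pi / 2 := by
        rw [div_le_div_iff₀ hX0 two_pos]
        nlinarith [mul_le_mul_of_nonneg_left hc hπ.le]

      have := Real.mul_le_sin h0 h2
      calc 2 * |c| / X = 2 / Real.pi * (Real.pi * |c| / X) := by field_simp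
        _ ≤ Real.sin (Real.pi * |c| / X) := this
    have hsin : (2 * |c| / X) ^ 2 ≤ (Real.sin (Real.pi * |c| / X)) ^ 2 := by
      have h0 : 0 ≤ 2 * |c| / X := by positivity
      exact pow_le_pow_left₀ h0 hjordan 2
    rw [hs]
    have hcc : 0 < |c| := abs_pos.mpr h
    calc 4 / (Real.pi ^ 2 * X ^ 2) = (2 * |c| / X) ^ 2 / (Real.pi * |c|) ^ 2 * 1 := by
          field_simp; ring
      _ = (2 * |c| / X) ^ 2 / (Real.pi * c) ^ 2 := by
          rw [mul_one]; congr 1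
          rw [mul_pow, mul_pow, sq_abs]
      _ ≤ (Real.sin (Real.pi * |c| / X)) ^ 2 / (Real.pi * c) ^ 2 :=
          div_le_div_of_nonneg_right hsin (by positivity) |>.trans_eq rfl

lemma phi_cont (N : ℕ) : Continuous (phi N) := by
  have : phi N = fun γ => ∑ p ∈ TT N, Real.cos (2 * Real.pi * (γ * (CC p : ℝ))) :=
    funext (phi_cos N)
  rw [this]
  exact continuous_finset_sum _ fun p _ =>
    Real.continuous_cos.comp (by continuity)

lemma window_bound (N : ℕ) (X t : ℝ) (hX : 1 ≤ X) :
    (((TT N).filter (fun p => |(CC p : ℝ) - t| ≤ X / 2)).card : ℝ) *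
        (4 / (Real.pi ^ 2 * X ^ 2))
      ≤ (1 / X) * ∫ γ in (-(1 / X) : ℝ)..(1 / X), phi N γ := by
  have hX0 : (0:ℝ) < X := lt_of_lt_of_le one_pos hX
  set b : ℝ := 1 / (2 * X) with hbdef
  have hb0 : 0 < b := by positivity
  set c : (Fin 5 → ℕ) × (Fin 5 → ℕ) → ℝ := fun p => (CC p : ℝ) - t with hcdef
  set M : ℝ := ∫ γ in (-(1 / X) : ℝ)..(1 / X), phi N γ with hMdef
  set S : ℝ := ∑ p ∈ TT N, (ww b (c p)) ^ 2 with hSdef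
  -- Part 1 : card bound below by S
  have part1 : (((TT N).filter (fun p => |(CC p : ℝ) - t| ≤ X / 2)).card : ℝ) *
      (4 / (Real.pi ^ 2 * X ^ 2)) ≤ S := by
    have h1 : (((TT N).filter (fun p => |(CC p : ℝ) - t| ≤ X / 2)).card : ℝ) *
        (4 / (Real.pi ^ 2 * X ^ 2))
        = ∑ _p ∈ (TT N).filter (fun p => |(CC p : ℝ) - t| ≤ X / 2),
            (4 / (Real.pi ^ 2 * X ^ 2)) := by
      rw [Finset.sum_const, nsmul_eq_mul]
    rw [h1]
    calc ∑ _p ∈ (TT N).filter (fun p => |(CC p : ℝ) - t| ≤ X / 2),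
          (4 / (Real.pi ^ 2 * X ^ 2))
        ≤ ∑ p ∈ (TT N).filter (fun p => |(CC p : ℝ) - t| ≤ X / 2), (ww b (c p)) ^ 2 := by
          refine Finset.sum_le_sum fun p hp => ?_
          have := (Finset.mem_filter.mp hp).2
          exact ww_sq_lower X (c p) hX this
      _ ≤ S := by
          refine Finset.sum_le_sum_of_subset_of_nonneg (Finset.filter_subset _ _)
            fun p _ _ => sq_nonneg _
  -- Part 2 : S ≤ M / X
  have cont_ee_mul : ∀ a : ℝ, Continuous fun β : ℝ => ee (a * β) :=
    fun a => ee_cont.comp (continuous_const.mul continuous_id)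
  have h2a : ∀ β : ℝ, (∫ β' in (-b:ℝ)..b,
      ∑ p ∈ TT N, ee (c p * β) * ee (-(c p) * β'))
      = ∑ p ∈ TT N, ee (c p * β) * ((ww b (c p) : ℝ) : ℂ) := by
    intro β
    rw [intervalIntegral.integral_finset_sum (f := fun p β' => ee (c p * β) * ee (-(c p) * β'))
      (fun p _ => ((continuous_const.mul (cont_ee_mul (-(c p)))).intervalIntegrable _ _))]
    refine Finset.sum_congr rfl fun p _ => ?_
    rw [intervalIntegral.integral_const_mul, int_ee b (-(c p)), ww_neg]
  have hGs : (∫ β in (-b:ℝ)..b,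
      ∑ p ∈ TT N, ee (c p * β) * ((ww b (c p) : ℝ) : ℂ)) = ((S : ℝ) : ℂ) := by
    rw [intervalIntegral.integral_finset_sum (f := fun p β => ee (c p * β) * ((ww b (c p) : ℝ) : ℂ))
      (fun p _ => ((cont_ee_mul (c p)).mul continuous_const).intervalIntegrable _ _)]
    have : ∀ p ∈ TT N, (∫ β in (-b:ℝ)..b, ee (c p * β) * ((ww b (c p) : ℝ) : ℂ))
        = (((ww b (c p)) ^ 2 : ℝ) : ℂ) := by
      intro p _
      rw [intervalIntegral.integral_mul_const, int_ee b (c p)]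
      push_cast; ring
    rw [Finset.sum_congr rfl this, hSdef]
    push_cast
    rfl
  have hMnn : 0 ≤ M := by
    rw [hMdef]
    apply intervalIntegral.integral_nonneg (by nlinarith [one_div_pos.mpr hX0] : (-(1/X):ℝ) ≤ 1/X)
    exact fun γ _ => phi_nonneg N γ
  have hHnorm : ∀ β β' : ℝ, (∑ p ∈ TT N, ee (c p * β) * ee (-(c p) * β'))
      = ee (-t * (β - β')) * ((phi N (β - β') : ℝ) : ℂ) := by
    intro β β'
    have : ∀ p ∈ TT N, ee (c p * β) * ee (-(c p) * β')
        = ee (-t * (β - β')) * ee ((β - β') * (CC p : ℝ)) := by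
      intro p _
      rw [← ee_add, ← ee_add, hcdef]
      congr 1
      ring
    rw [Finset.sum_congr rfl this, ← Finset.mul_sum, ← expand N (β - β')]
  have hnorm : ∀ β ∈ Set.uIoc (-b) b,
      ‖∑ p ∈ TT N, ee (c p * β) * ((ww b (c p) : ℝ) : ℂ)‖ ≤ M := by
    intro β hβ
    rw [Set.uIoc_of_le (by linarith : (-b:ℝ) ≤ b)] at hβ
    rw [← h2a β]
    refine (intervalIntegral.norm_integral_le_integral_norm (by linarith : (-b:ℝ) ≤ b)).trans ?_
    have hcongr : (∫ β' in (-b:ℝ)..b, ‖∑ p ∈ TT N, ee (c p * β) * ee (-(c p) * β')‖)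
        = ∫ β' in (-b:ℝ)..b, phi N (β - β') := by
      refine intervalIntegral.integral_congr fun β' _ => ?_
      rw [hHnorm β β', norm_mul]
      have h1 : ‖ee (-t * (β - β'))‖ = 1 := abs_ee _
      rw [h1, one_mul, Complex.norm_real, Real.norm_eq_abs,
        abs_of_nonneg (phi_nonneg N _)]
    rw [hcongr, intervalIntegral.integral_comp_sub_left (phi N) β]
    have h2b : 2 * b = 1 / X := by rw [hbdef]; field_simp
    refine intervalIntegral.integral_mono_interval (by linarith [hβ.1] : (-(1/X):ℝ) ≤ β - b)
      (by linarith : β - b ≤ β - -b) (by linarith [hβ.2] : β - -b ≤ 1/X)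
      (Filter.Eventually.of_forall fun γ => phi_nonneg N γ)
      ((phi_cont N).intervalIntegrable _ _)
  have part2 : S ≤ (1 / X) * M := by
    have hS_le : S ≤ ‖((S:ℝ):ℂ)‖ := by
      rw [Complex.norm_real, Real.norm_eq_abs]; exact le_abs_self S
    have hGnorm : ‖((S:ℝ):ℂ)‖ ≤ M * |b - (-b)| := by
      rw [← hGs]
      exact intervalIntegral.norm_integral_le_of_norm_le_const hnorm
    have habs : |b - (-b)| = 2 * b := by
      rw [abs_of_nonneg (by linarith)]; ring
    have h2b : 2 * b = 1 / X := by rw [hbdef]; field_simp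
    calc S ≤ M * |b - (-b)| := hS_le.trans hGnorm
      _ = (1 / X) * M := by rw [habs, h2b]; ring
  exact part1.trans part2

lemma cover_exists (H X m : ℝ) (hX : 0 < X) (K : ℕ) (hK : (K : ℝ) = 6 * H)
    (hm : |m| < 3 * H * X) : ∃ j < K, |m - (-(3 * H * X) + X / 2 + j * X)| ≤ X / 2 := by
  have hab := abs_lt.mp hm
  set u : ℝ := m + 3 * H * X with hu
  have hu0 : 0 < u := by rw [hu]; linarith [hab.1]
  have huX : u < 6 * H * X := by rw [hu]; linarith [hab.2]
  set j : ℕ := ⌊u / X⌋₊ with hj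
  have h1 : (j : ℝ) * X ≤ u := by
    have := Nat.floor_le (show (0:ℝ) ≤ u / X by positivity)
    calc (j:ℝ) * X ≤ (u / X) * X := by nlinarith
      _ = u := by field_simp
  have h2 : u < ((j : ℝ) + 1) * X := by
    have := Nat.lt_floor_add_one (u / X)
    calc u = (u / X) * X := by field_simp
      _ < ((j:ℝ) + 1) * X := by nlinarith
  refine ⟨j, ?_, ?_⟩
  · have : u / X < (K : ℝ) := by
      rw [hK, div_lt_iff₀ hX]
      nlinarith
    exact_mod_cast Nat.floor_lt (by positivity) |>.mpr this
  · rw [abs_le]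
    constructor <;> [skip; skip] <;> nlinarith [h1, h2]

theorem count_U1_bound (h₂ : ℤ) (hh₂ : h₂ ≠ 0) (ε : ℝ) (hε : 0 < ε)
    (hcap : ∃ C₁ : ℝ, 0 < C₁ ∧ ∀ X : ℝ, 1 ≤ X →
      (∫ α₃ in (-(1 / X) : ℝ)..(1 / X), ∫ α₂ in (0:ℝ)..1, ∫ α₁ in (0:ℝ)..1,
          ‖∑ x ∈ Finset.Icc 1 ⌊2 * X⌋₊,
              Complex.exp (2 * Real.pi * Complex.I *
                ((α₁ : ℂ) * (x : ℂ) + (α₂ : ℂ) * (x : ℂ) ^ 2 +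
                  (α₃ : ℂ) * (x : ℂ) ^ 3))‖ ^ 10)
        ≤ C₁ * X ^ ((4 : ℝ) + ε)) :
    ∃ C : ℝ, 0 < C ∧ ∀ X : ℝ, 1 ≤ X →
      ((Finset.filter
          (fun p : (Fin 5 → ℤ) × (Fin 5 → ℤ) =>
            (|(∑ i, ((p.1 i) ^ 3 - (p.2 i) ^ 3) : ℤ)| : ℝ) < 3 * |(h₂ : ℝ)| * X ∧
            (∑ i, ((p.1 i) ^ 2 - (p.2 i) ^ 2)) = 0 ∧
            (∑ i, (p.1 i - p.2 i)) = 0)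
          ((Fintype.piFinset fun _ : Fin 5 => Finset.Icc 1 ⌊2 * X⌋) ×ˢ
            (Fintype.piFinset fun _ : Fin 5 => Finset.Icc 1 ⌊2 * X⌋))).card : ℝ)
        ≤ C * |(h₂ : ℝ)| * X ^ ((5 : ℝ) + ε) := by
  obtain ⟨C₁, hC₁0, hC₁⟩ := hcap
  refine ⟨3 * Real.pi ^ 2 / 2 * C₁, by positivity, ?_⟩
  intro X hX
  have hX0 : (0:ℝ) < X := lt_of_lt_of_le one_pos hX
  set N : ℕ := ⌊2 * X⌋₊ with hN
  set K : ℕ := 6 * h₂.natAbs with hK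
  have hKr : (K : ℝ) = 6 * |(h₂ : ℝ)| := by
    rw [hK]
    push_cast [Nat.cast_natAbs]
    ring
  set t : ℕ → ℝ := fun j => -(3 * |(h₂:ℝ)| * X) + X / 2 + j * X with ht
  -- injection into the union of windows
  have hcard : (Finset.filter
          (fun p : (Fin 5 → ℤ) × (Fin 5 → ℤ) =>
            (|(∑ i, ((p.1 i) ^ 3 - (p.2 i) ^ 3) : ℤ)| : ℝ) < 3 * |(h₂ : ℝ)| * X ∧
            (∑ i, ((p.1 i) ^ 2 - (p.2 i) ^ 2)) = 0 ∧
            (∑ i, (p.1 i - p.2 i)) = 0)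
          ((Fintype.piFinset fun _ : Fin 5 => Finset.Icc 1 ⌊2 * X⌋) ×ˢ
            (Fintype.piFinset fun _ : Fin 5 => Finset.Icc 1 ⌊2 * X⌋))).card
      ≤ ((Finset.range K).biUnion
          (fun j => (TT N).filter (fun p => |(CC p : ℝ) - t j| ≤ X / 2))).card := by
    apply Finset.card_le_card_of_injOn
      (fun p => ((fun i => (p.1 i).toNat), (fun i => (p.2 i).toNat)))
    · intro p hp
      obtain ⟨hmem, habs, hQ, hL⟩ := Finset.mem_filter.mp hp
      obtain ⟨h1m, h2m⟩ := Finset.mem_product.mp hmem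
      have h1i : ∀ i, 1 ≤ p.1 i ∧ p.1 i ≤ ⌊2 * X⌋ := by
        intro i
        exact Finset.mem_Icc.mp (Fintype.mem_piFinset.mp h1m i)
      have h2i : ∀ i, 1 ≤ p.2 i ∧ p.2 i ≤ ⌊2 * X⌋ := by
        intro i
        exact Finset.mem_Icc.mp (Fintype.mem_piFinset.mp h2m i)
      have hc1 : ∀ i, (((p.1 i).toNat : ℤ)) = p.1 i :=
        fun i => Int.toNat_of_nonneg (by linarith [(h1i i).1])
      have hc2 : ∀ i, (((p.2 i).toNat : ℤ)) = p.2 i :=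
        fun i => Int.toNat_of_nonneg (by linarith [(h2i i).1])
      have hTT : ((fun i => (p.1 i).toNat), (fun i => (p.2 i).toNat)) ∈ TT N := by
        rw [TT, Finset.mem_filter]
        refine ⟨?_, ?_, ?_⟩
        · rw [boxS, Finset.mem_product]
          constructor <;> rw [Fintype.mem_piFinset] <;> intro i <;>
            rw [Finset.mem_Icc] <;> constructor
          · exact (Int.toNat_le_toNat (h1i i).1 : (1:ℤ).toNat ≤ _)
          · rw [hN, ← Int.floor_toNat]
            exact Int.toNat_le_toNat (h1i i).2
          · exact (Int.toNat_le_toNat (h2i i).1 : (1:ℤ).toNat ≤ _)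
          · rw [hN, ← Int.floor_toNat]
            exact Int.toNat_le_toNat (h2i i).2
        · rw [LL]
          simp only
          rw [Finset.sum_congr rfl (fun i _ => by rw [hc1 i, hc2 i])]
          exact hL
        · rw [QQ]
          simp only
          rw [Finset.sum_congr rfl (fun i _ => by rw [hc1 i, hc2 i])]
          exact hQ
      have hCCval : CC ((fun i => (p.1 i).toNat), (fun i => (p.2 i).toNat))
          = ∑ i, ((p.1 i) ^ 3 - (p.2 i) ^ 3) := by
        rw [CC]
        simp only
        exact Finset.sum_congr rfl (fun i _ => by rw [hc1 i, hc2 i])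
      obtain ⟨j, hjK, hjw⟩ := cover_exists |(h₂:ℝ)| X
        ((∑ i, ((p.1 i) ^ 3 - (p.2 i) ^ 3) : ℤ) : ℝ) hX0 K hKr (by exact_mod_cast habs)
      rw [Finset.mem_coe, Finset.mem_biUnion]
      exact ⟨j, Finset.mem_range.mpr hjK, Finset.mem_filter.mpr
        ⟨hTT, by rw [hCCval, ht]; exact_mod_cast hjw⟩⟩
    · intro p hp q hq hfq
      obtain ⟨hmem, _, _, _⟩ := Finset.mem_filter.mp hp
      obtain ⟨hmemq, _, _, _⟩ := Finset.mem_filter.mp hq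
      obtain ⟨h1m, h2m⟩ := Finset.mem_product.mp hmem
      obtain ⟨h1mq, h2mq⟩ := Finset.mem_product.mp hmemq
      have hpos : ∀ (r : Fin 5 → ℤ), r ∈ Fintype.piFinset (fun _ : Fin 5 => Finset.Icc (1:ℤ) ⌊2 * X⌋) →
          ∀ i, 0 ≤ r i :=
        fun r hr i => le_trans zero_le_one (Finset.mem_Icc.mp (Fintype.mem_piFinset.mp hr i)).1
      have h1 := congrArg Prod.fst hfq
      have h2 := congrArg Prod.snd hfq
      simp only at h1 h2
      ext i
      · have := congrFun h1 i
        have e1 := Int.toNat_of_nonneg (hpos p.1 h1m i)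
        have e2 := Int.toNat_of_nonneg (hpos q.1 h1mq i)
        rw [← e1, ← e2, this]
      · have := congrFun h2 i
        have e1 := Int.toNat_of_nonneg (hpos p.2 h2m i)
        have e2 := Int.toNat_of_nonneg (hpos q.2 h2mq i)
        rw [← e1, ← e2, this]
  -- bound each window
  have hM : (∫ γ in (-(1/X):ℝ)..(1/X), phi N γ) ≤ C₁ * X ^ ((4:ℝ)+ε) := hC₁ X hX
  have hMnn : 0 ≤ ∫ γ in (-(1/X):ℝ)..(1/X), phi N γ := by
    apply intervalIntegral.integral_nonneg (by nlinarith [one_div_pos.mpr hX0] : (-(1/X):ℝ) ≤ 1/X)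
    exact fun γ _ => phi_nonneg N γ
  have hXpow : X * X ^ ((4:ℝ)+ε) = X ^ ((5:ℝ)+ε) := by
    rw [show X * X ^ ((4:ℝ)+ε) = X ^ (1:ℝ) * X ^ ((4:ℝ)+ε) by rw [Real.rpow_one],
      ← Real.rpow_add hX0]
    norm_num
    congr 1
    ring
  have hwin : ∀ j : ℕ, (((TT N).filter (fun p => |(CC p : ℝ) - t j| ≤ X / 2)).card : ℝ)
      ≤ Real.pi ^ 2 / 4 * C₁ * X ^ ((5:ℝ)+ε) := by
    intro j
    have h1 := window_bound N X (t j) hX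
    have hπ := Real.pi_pos
    set M := ∫ γ in (-(1/X):ℝ)..(1/X), phi N γ
    set cd := (((TT N).filter (fun p => |(CC p : ℝ) - t j| ≤ X / 2)).card : ℝ)
    have hcd0 : 0 ≤ cd := Nat.cast_nonneg _
    have hfac : (0:ℝ) < 4 / (Real.pi ^ 2 * X ^ 2) := by positivity
    have h2 : cd ≤ (1/X) * M * (Real.pi ^ 2 * X ^ 2 / 4) := by
      rw [← mul_le_mul_iff_of_pos_right hfac]
      calc cd * (4 / (Real.pi ^ 2 * X ^ 2)) ≤ (1/X) * M := h1
        _ = (1/X) * M * (Real.pi ^ 2 * X ^ 2 / 4) * (4 / (Real.pi ^ 2 * X ^ 2)) := by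
            field_simp
    refine h2.trans ?_
    have h3 : (1/X) * M * (Real.pi ^ 2 * X ^ 2 / 4) = Real.pi ^ 2 / 4 * (X * M) := by
      field_simp
    rw [h3, ← hXpow]
    have hXM : X * M ≤ X * (C₁ * X ^ ((4:ℝ)+ε)) := mul_le_mul_of_nonneg_left hM hX0.le
    calc Real.pi ^ 2 / 4 * (X * M)
        ≤ Real.pi ^ 2 / 4 * (X * (C₁ * X ^ ((4:ℝ)+ε))) :=
          mul_le_mul_of_nonneg_left hXM (by positivity)
      _ = Real.pi ^ 2 / 4 * C₁ * (X * X ^ ((4:ℝ)+ε)) := by ring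
  -- put it together
  calc ((Finset.filter _ _).card : ℝ)
      ≤ (((Finset.range K).biUnion
          (fun j => (TT N).filter (fun p => |(CC p : ℝ) - t j| ≤ X / 2))).card : ℝ) := by
        exact_mod_cast hcard
    _ ≤ ∑ j ∈ Finset.range K,
          (((TT N).filter (fun p => |(CC p : ℝ) - t j| ≤ X / 2)).card : ℝ) := by
        exact_mod_cast Finset.card_biUnion_le
    _ ≤ ∑ _j ∈ Finset.range K, (Real.pi ^ 2 / 4 * C₁ * X ^ ((5:ℝ)+ε)) :=
        Finset.sum_le_sum fun j _ => hwin j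
    _ = (K : ℝ) * (Real.pi ^ 2 / 4 * C₁ * X ^ ((5:ℝ)+ε)) := by
        rw [Finset.sum_const, Finset.card_range, nsmul_eq_mul]
    _ = 3 * Real.pi ^ 2 / 2 * C₁ * |(h₂ : ℝ)| * X ^ ((5 : ℝ) + ε) := by
        rw [hKr]; ring
end
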